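/- arXiv:2308.00641 — 7 statements merged into one kernel-verified Lean document; each statement's English description precedes it below -/
import Mathlib

section
/- If G is an abelian group of finite torsion-free rank with bounded p-torsion for all primes p, and K is a subgroup such that G/K is torsion, then for every prime p the p-primary component of G/K is the direct sum of a divisible group and a bounded group. -/
open TensorProduct

/-- p-primary torsion subgroup. -/
def pTorsion (G : Type*) [AddCommGroup G] (p : ℕ) : AddSubgroup G where
  carrier := {x | ∃ n : ℕ, p ^ n • x = 0}
  zero_mem' := ⟨0, by simp⟩
  add_mem' := by
    rintro a b ⟨m, hm⟩ ⟨n, hn⟩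
    refine ⟨m + n, ?_⟩
    have ha : p ^ (m + n) • a = 0 := by rw [pow_add, mul_comm, mul_smul, hm, smul_zero]
    have hb : p ^ (m + n) • b = 0 := by rw [pow_add, mul_smul, hn, smul_zero]
    rw [smul_add, ha, hb, add_zero]
  neg_mem' := by
    rintro a ⟨m, hm⟩
    exact ⟨m, by rw [smul_neg, hm, neg_zero]⟩

/-- finite torsion-free rank: the ℚ-dimension of ℚ ⊗ G is finite. -/
def FiniteRank (G : Type*) [AddCommGroup G] : Prop :=
  Module.rank ℚ (ℚ ⊗[ℤ] G) < Cardinal.aleph0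

/-- bounded p-torsion for all primes. -/
def BoundedPTorsion (G : Type*) [AddCommGroup G] : Prop :=
  ∀ p : ℕ, p.Prime → ∃ n : ℕ, ∀ x ∈ pTorsion G p, p ^ n • x = 0

/-- Bassian (via the characterization): finite torsion-free rank and finite p-torsion. -/
def Bassian (G : Type*) [AddCommGroup G] : Prop :=
  FiniteRank G ∧ ∀ p : ℕ, p.Prime → (pTorsion G p : Set G).Finite

/-- elementary: torsion and each p-primary component killed by p. -/
def Elementary (G : Type*) [AddCommGroup G] : Prop :=
  AddMonoid.IsTorsion G ∧ ∀ p : ℕ, p.Prime → ∀ x ∈ pTorsion G p, p • x = 0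

/-- generalized Bassian. -/
def GeneralizedBassian (G : Type*) [AddCommGroup G] : Prop :=
  ∀ N : AddSubgroup G, (∃ f : G →+ G ⧸ N, Function.Injective f) →
    ∃ H : AddSubgroup G, IsCompl N H
theorem aux_divisible_isCompl {A : Type*} [AddCommGroup A] (D : AddSubgroup A)
    (hdiv : ∀ n : ℕ, 0 < n → ∀ x : ↥D, ∃ y : ↥D, n • y = x) :
    ∃ B : AddSubgroup A, IsCompl D B := by
  have hz : ∀ n : ℤ, n ≠ 0 → ∀ x : ↥D, ∃ y : ↥D, n • y = x := by
    intro n hn x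
    obtain ⟨y, hy⟩ := hdiv n.natAbs (Int.natAbs_pos.mpr hn) x
    rcases Int.natAbs_eq n with h | h
    · exact ⟨y, by rw [h, natCast_zsmul, hy]⟩
    · exact ⟨-y, by rw [h, neg_zsmul, zsmul_neg, neg_neg, natCast_zsmul, hy]⟩
  have : DivisibleBy (↥D) ℤ :=
    { div := fun a n => if h : n = 0 then 0 else (hz n h a).choose
      div_zero := fun a => by simp
      div_cancel := fun a hn => by
        rw [dif_neg hn]; exact (hz _ hn a).choose_spec }
  have baer : Module.Baer ℤ ↥D := Module.Baer.of_divisible ↥D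
  have inj : Module.Injective ℤ ↥D := baer.injective
  obtain ⟨h, hh⟩ := inj.out D.subtype.toIntLinearMap
      (by exact Subtype.val_injective) LinearMap.id
  refine ⟨(LinearMap.ker h).toAddSubgroup, isCompl_iff.mpr ⟨?_, ?_⟩⟩
  · rw [AddSubgroup.disjoint_def]
    intro x hxD hxB
    have h1 : h x = ⟨x, hxD⟩ := hh ⟨x, hxD⟩
    have h2 : h x = 0 := hxB
    have : (⟨x, hxD⟩ : ↥D) = 0 := by rw [← h1, h2]
    simpa using congrArg Subtype.val this
  · rw [codisjoint_iff, eq_top_iff]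
    intro x _
    rw [AddSubgroup.mem_sup]
    refine ⟨(h x : A), (h x).2, x - (h x : A), ?_, by abel⟩
    show h (x - (h x : A)) = 0
    have : h ((h x : A)) = h x := hh (h x)
    rw [map_sub, this, sub_self]

theorem aux_tensor_zero {G : Type*} [AddCommGroup G] (g : G)
    (h : (1 : ℚ) ⊗ₜ[ℤ] g = 0) : ∃ N : ℕ, 0 < N ∧ (N : ℤ) • g = 0 := by
  have hbc : IsLocalizedModule (nonZeroDivisors ℤ) (TensorProduct.mk ℤ ℚ G 1) :=
    (isLocalizedModule_iff_isBaseChange (nonZeroDivisors ℤ) ℚ _).mpr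
      (TensorProduct.isBaseChange ℤ G ℚ)
  obtain ⟨s, hs⟩ := (IsLocalizedModule.eq_zero_iff (nonZeroDivisors ℤ)
    (TensorProduct.mk ℤ ℚ G 1)).mp h
  have hs' : (s : ℤ) • g = 0 := hs
  refine ⟨(s : ℤ).natAbs, Int.natAbs_pos.mpr (nonZeroDivisors.coe_ne_zero s), ?_⟩
  rcases Int.natAbs_eq (s : ℤ) with he | he
  · rw [← he]; exact hs'
  · have h2 : ((s:ℤ).natAbs : ℤ) = -(s:ℤ) := by omega
    rw [h2, neg_zsmul, hs', neg_zero]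

/-- for G of finite rank with bounded p-torsion and G/K torsion, each
p-primary component of G/K is the direct sum of a divisible group and a bounded group. -/
theorem stmt4 {G : Type*} [AddCommGroup G] (h1 : FiniteRank G) (h2 : BoundedPTorsion G)
    (K : AddSubgroup G) (hK : AddMonoid.IsTorsion (G ⧸ K)) (p : ℕ) (hp : p.Prime) :
    ∃ D B : AddSubgroup ↥(pTorsion (G ⧸ K) p), IsCompl D B ∧
      (∀ n : ℕ, 0 < n → ∀ x ∈ D, ∃ y ∈ D, n • y = x) ∧
      (∃ n : ℕ, 0 < n ∧ ∀ x ∈ B, n • x = 0) := by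
  classical
  obtain ⟨k, hk⟩ := h2 p hp
  have hpInt : Prime (p : ℤ) := Nat.prime_iff_prime_int.mp hp
  have hcop : ∀ z : ℤ, ¬ (p:ℤ) ∣ z → IsCoprime (p:ℤ) z := by
    intro z hz
    rw [Int.isCoprime_iff_gcd_eq_one]
    have : ¬ p ∣ z.natAbs := fun hd => hz (Int.natAbs_dvd_natAbs.mp (by simpa using hd))
    have := (Nat.Prime.coprime_iff_not_dvd hp).mpr this
    simpa [Int.gcd] using this
  set P := ↥(pTorsion (G ⧸ K) p) with hPdef
  let sm : ℤ → P →+ P := fun n => AddMonoidHom.mk' (fun x => n • x) (fun a b => smul_add n a b)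
  let C : ℕ → AddSubgroup P := fun n => (sm ((p:ℤ)^n)).range
  have hCmem : ∀ (n : ℕ) (x : P), x ∈ C n ↔ ∃ y : P, (p:ℤ)^n • y = x := by
    intro n x; exact AddMonoidHom.mem_range
  have hCanti : ∀ {m n : ℕ}, m ≤ n → C n ≤ C m := by
    intro m n hmn x hx
    obtain ⟨y, hy⟩ := (hCmem n x).1 hx
    refine (hCmem m x).2 ⟨(p:ℤ)^(n-m) • y, ?_⟩
    rw [← mul_smul, ← pow_add, show m + (n - m) = n from by omega, hy]
  let T : ℕ → AddSubgroup P := fun n => C n ⊓ (sm (p:ℤ)).ker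
  have hTanti : ∀ {m n : ℕ}, m ≤ n → T n ≤ T m :=
    fun hmn => inf_le_inf_right _ (hCanti hmn)
  have htor : ∀ x : P, ∃ t : ℕ, (p:ℤ)^t • x = 0 := by
    intro x
    obtain ⟨t, ht⟩ := x.2
    refine ⟨t, Subtype.ext ?_⟩
    have h1 : ((((p:ℤ)^t • x) : P) : G ⧸ K) = (p:ℤ)^t • (x : G ⧸ K) := rfl
    rw [h1, show ((p:ℤ)^t) = ((p^t : ℕ) : ℤ) from by push_cast; ring, natCast_zsmul, ht]
    rfl
  let r : ℕ := Module.finrank ℚ (ℚ ⊗[ℤ] G)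
  have hfin : Module.Finite ℚ (ℚ ⊗[ℤ] G) := Module.rank_lt_aleph0_iff.mp h1
  have key : ∀ a : Fin (r+1) → P, (∀ i, a i ∈ C k) →
      ∃ c : Fin (r+1) → ℤ, (∃ i, ¬ (p:ℤ) ∣ c i) ∧ ∑ i, c i • a i = 0 := by
    intro a ha
    choose b hb using fun i => (hCmem k (a i)).1 (ha i)
    have hsur := QuotientAddGroup.mk'_surjective K
    choose g hg using fun i => hsur ((b i : G ⧸ K))
    set v : Fin (r+1) → ℚ ⊗[ℤ] G := fun i => (1:ℚ) ⊗ₜ[ℤ] (g i) with hv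
    have hdep : ¬ LinearIndependent ℚ v := by
      intro hind
      have hle := hind.fintype_card_le_finrank
      rw [Fintype.card_fin] at hle
      omega
    obtain ⟨q, hq, i₀, hqi⟩ := Fintype.not_linearIndependent_iff.mp hdep
    obtain ⟨d, hd⟩ := IsLocalization.exist_integer_multiples_of_finite (nonZeroDivisors ℤ) q
    choose c0 hc0 using hd
    have hsum0 : ∑ i, (c0 i : ℚ) • v i = 0 := by
      have e1 : ∀ i, (c0 i : ℚ) • v i = (d:ℤ) • (q i • v i) := by
        intro i
        rw [show ((c0 i : ℚ)) = (d:ℤ) • q i from hc0 i, smul_assoc]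
      rw [Finset.sum_congr rfl (fun i _ => e1 i), ← Finset.smul_sum, hq, smul_zero]
    have hc0i : c0 i₀ ≠ 0 := by
      intro h0
      have h3 := hc0 i₀
      rw [h0] at h3
      have : (d:ℤ) • q i₀ = 0 := by simpa using h3.symm
      rw [zsmul_eq_mul] at this
      rcases mul_eq_zero.mp this with hh | hh
      · exact nonZeroDivisors.coe_ne_zero d (by exact_mod_cast hh)
      · exact hqi hh
    have strip : ∀ (N : ℕ) (c : Fin (r+1) → ℤ) (i1 : Fin (r+1)), (c i1).natAbs = N → c i1 ≠ 0 →
        ∑ i, (c i : ℚ) • v i = 0 →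
        ∃ c' : Fin (r+1) → ℤ, (∃ j, ¬ (p:ℤ) ∣ c' j) ∧ ∑ i, (c' i : ℚ) • v i = 0 := by
      intro N
      induction N using Nat.strong_induction_on with
      | _ N ih =>
        intro c i1 hN hc1 hsum
        by_cases hall : ∀ j, (p:ℤ) ∣ c j
        · choose c' hc' using hall
          have hnez : c' i1 ≠ 0 := fun h => hc1 (by rw [hc' i1, h, mul_zero])
          have hlt : (c' i1).natAbs < N := by
            subst hN
            rw [hc' i1, Int.natAbs_mul]
            have h2 : 2 ≤ (p:ℤ).natAbs := by simpa using hp.two_le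
            have h3 : 1 ≤ (c' i1).natAbs := Int.natAbs_pos.mpr hnez
            nlinarith
          refine ih _ hlt c' i1 rfl hnez ?_
          have e2 : ∑ i, (c i : ℚ) • v i = (p:ℚ) • ∑ i, (c' i : ℚ) • v i := by
            rw [Finset.smul_sum]
            refine Finset.sum_congr rfl (fun i _ => ?_)
            rw [hc' i, smul_smul]
            push_cast
            ring_nf
          rw [e2] at hsum
          rcases smul_eq_zero.mp hsum with hh | hh
          · exact absurd (by exact_mod_cast hh) hp.pos.ne'
          · exact hh
        · push_neg at hall
          exact ⟨c, hall, hsum⟩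
    obtain ⟨c, ⟨j0, hj0⟩, hcsum⟩ := strip _ c0 i₀ rfl hc0i hsum0
    set s : G := ∑ i, c i • g i with hs
    have htens : (1:ℚ) ⊗ₜ[ℤ] s = 0 := by
      have e3 : (1:ℚ) ⊗ₜ[ℤ] s = ∑ i, (c i : ℚ) • v i := by
        rw [hs]
        rw [show ((1:ℚ) ⊗ₜ[ℤ] (∑ i, c i • g i)) = (TensorProduct.mk ℤ ℚ G 1) (∑ i, c i • g i) from rfl]
        rw [map_sum]
        refine Finset.sum_congr rfl (fun i _ => ?_)
        rw [map_zsmul, Int.cast_smul_eq_zsmul]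
        rfl
      rw [e3, hcsum]
    obtain ⟨Nt, hNtpos, hNts⟩ := aux_tensor_zero s htens
    set e := Nt.factorization p with he
    set M := Nt / p ^ e with hM
    have hNM : p ^ e * M = Nt := Nat.ordProj_mul_ordCompl_eq_self Nt p
    have hMnd : ¬ p ∣ M := Nat.not_dvd_ordCompl hp hNtpos.ne'
    have hMZnd : ¬ (p:ℤ) ∣ (M:ℤ) := fun hdd => hMnd (by exact_mod_cast hdd)
    have hcoM : IsCoprime ((p:ℤ)) ((M:ℤ)) := hcop _ hMZnd
    obtain ⟨u, w, huw⟩ := (IsCoprime.pow_left (m := e) hcoM)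
    -- u * p^e + w * M = 1
    have hNZ : ((p:ℤ)^e * (M:ℤ)) • s = 0 := by
      rw [show ((p:ℤ)^e * (M:ℤ)) = ((Nt : ℕ) : ℤ) from by rw [← hNM]; push_cast; ring]
      exact hNts
    set tp : G := (w * (M:ℤ)) • s with htp
    have htpmem : tp ∈ pTorsion G p := by
      refine ⟨e, ?_⟩
      rw [show ((p^e : ℕ) • tp) = ((p:ℤ)^e • tp) from by rw [← natCast_zsmul]; push_cast; ring_nf]
      rw [htp, ← mul_smul, show (p:ℤ)^e * (w * (M:ℤ)) = w * ((p:ℤ)^e * (M:ℤ)) from by ring,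
        mul_smul, hNZ, smul_zero]
    have hktp : (p:ℤ)^k • tp = 0 := by
      have := hk tp htpmem
      rw [show ((p:ℤ)^k • tp) = ((p^k : ℕ) • tp) from by rw [← natCast_zsmul]; push_cast; ring_nf]
      exact this
    have hMs : (M:ℤ) • s = (M:ℤ) • tp := by
      have e4 : s = (u * (p:ℤ)^e + w * (M:ℤ)) • s := by rw [huw, one_smul]
      calc (M:ℤ) • s = (M:ℤ) • ((u * (p:ℤ)^e + w * (M:ℤ)) • s) := by rw [← e4]
        _ = (M:ℤ) • ((u * (p:ℤ)^e) • s) + (M:ℤ) • tp := by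
              rw [add_smul, smul_add, htp]
        _ = (M:ℤ) • tp := by
              have e5 : (M:ℤ) • ((u * (p:ℤ)^e) • s) = 0 := by
                rw [← mul_smul, show (M:ℤ) * (u * (p:ℤ)^e) = u * ((p:ℤ)^e * (M:ℤ)) from by ring,
                  mul_smul, hNZ, smul_zero]
              rw [e5, zero_add]
    have hMks : (M:ℤ) • ((p:ℤ)^k • s) = 0 := by
      rw [smul_comm ((M:ℤ)) ((p:ℤ)^k) s, hMs, smul_comm ((p:ℤ)^k) ((M:ℤ)) tp, hktp, smul_zero]
    -- push to the quotient
    set π := QuotientAddGroup.mk' K with hπ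
    set w0 : P := ∑ i, c i • a i with hw0
    have hw0Q : (w0 : G ⧸ K) = (p:ℤ)^k • (π s) := by
      have e6 : (w0 : G ⧸ K) = ∑ i, c i • ((a i : G ⧸ K)) := by
        rw [hw0]
        exact map_sum (pTorsion (G ⧸ K) p).subtype _ _
      rw [e6, hs, map_sum, Finset.smul_sum]
      refine Finset.sum_congr rfl (fun i _ => ?_)
      rw [map_zsmul, hg i, ← hb i]
      rw [show (((((p:ℤ)^k • b i)) : P) : G ⧸ K) = (p:ℤ)^k • ((b i : G ⧸ K)) from rfl]
      rw [smul_comm]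
    have hMw0 : (M:ℤ) • w0 = 0 := by
      refine Subtype.ext ?_
      have e7 : (((M:ℤ) • w0 : P) : G ⧸ K) = (M:ℤ) • (w0 : G ⧸ K) := rfl
      rw [e7, hw0Q, ← map_zsmul π, ← map_zsmul π, hMks, map_zero]
      rfl
    obtain ⟨t, ht⟩ := htor w0
    have hcoMp : IsCoprime ((M:ℤ)) ((p:ℤ)^t) := IsCoprime.pow_right (n := t) hcoM.symm
    obtain ⟨u2, w2, huw2⟩ := hcoMp
    have hw00 : w0 = 0 := by
      calc w0 = (u2 * (M:ℤ) + w2 * (p:ℤ)^t) • w0 := by rw [huw2, one_smul]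
        _ = u2 • ((M:ℤ) • w0) + w2 • ((p:ℤ)^t • w0) := by
              rw [add_smul, mul_smul, mul_smul]
        _ = 0 := by rw [hMw0, ht, smul_zero, smul_zero, add_zero]
    exact ⟨c, ⟨j0, hj0⟩, by rw [← hw0, hw00]⟩
  -- Stage 2: the chain T stabilizes
  have hstab : ∃ N : ℕ, ∀ n, N ≤ n → T (k+n) = T (k+N) := by
    by_contra hcon
    push_neg at hcon
    choose nxt hnxt hne using hcon
    let f : ℕ → ℕ := fun j => Nat.rec 0 (fun _ m => nxt m) j
    have hfs : ∀ j, f (j+1) = nxt (f j) := fun j => rfl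
    have hfmono : Monotone f := monotone_nat_of_le_succ (fun j => by rw [hfs]; exact hnxt (f j))
    have hlt : ∀ j, T (k + nxt (f j)) < T (k + f j) :=
      fun j => lt_of_le_of_ne (hTanti (by have := hnxt (f j); omega)) (hne (f j))
    choose a haT hanot using fun j => SetLike.exists_of_lt (hlt j)
    obtain ⟨c, ⟨j0, hj0⟩, hcs⟩ := key (fun i : Fin (r+1) => a i)
      (fun i => hCanti (by omega) ((le_trans inf_le_left le_rfl : T (k + f (i:ℕ)) ≤ C (k + f (i:ℕ)))
        (haT (i:ℕ))))
    set sF : Finset (Fin (r+1)) := Finset.univ.filter (fun i => ¬ (p:ℤ) ∣ c i) with hsF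
    have hsFne : sF.Nonempty := ⟨j0, by simp [hsF, hj0]⟩
    obtain ⟨i, hiF, himin⟩ := sF.exists_min_image id hsFne
    have hind : ¬ (p:ℤ) ∣ c i := by simpa [hsF] using hiF
    have hdvd_lt : ∀ j : Fin (r+1), j < i → (p:ℤ) ∣ c j := by
      intro j hj
      by_contra hnd
      have : j ∈ sF := by simp [hsF, hnd]
      exact absurd (himin j this) (by simpa using not_le.mpr hj)
    have hker : ∀ j : ℕ, (p:ℤ) • a j = 0 := by
      intro j
      have := (AddSubgroup.mem_inf.mp (haT j)).2
      simpa [sm] using this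
    have hmem : c i • a (i:ℕ) ∈ T (k + nxt (f (i:ℕ))) := by
      have e8 : c i • a (i:ℕ) = - ∑ j ∈ Finset.univ.erase i, c j • a (j:ℕ) := by
        have := Finset.add_sum_erase Finset.univ (fun j : Fin (r+1) => c j • a (j:ℕ))
          (Finset.mem_univ i)
        rw [hcs] at this
        exact eq_neg_of_add_eq_zero_left this
      rw [e8]
      refine neg_mem (AddSubgroup.sum_mem _ ?_)
      intro j hjmem
      have hji : j ≠ i := Finset.ne_of_mem_erase hjmem
      rcases lt_or_gt_of_ne hji with hlt' | hgt
      · obtain ⟨d0, hd0⟩ := hdvd_lt j hlt'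
        rw [hd0, show ((p:ℤ) * d0) = d0 * p from mul_comm _ _, mul_smul, hker, smul_zero]
        exact zero_mem _
      · have hle2 : T (k + f (j:ℕ)) ≤ T (k + nxt (f (i:ℕ))) := by
          refine hTanti ?_
          have h9 : (i:ℕ) + 1 ≤ (j:ℕ) := hgt
          have := hfmono h9
          rw [hfs] at this
          omega
        exact AddSubgroup.zsmul_mem _ (hle2 (haT (j:ℕ))) _
    have hcopi : IsCoprime ((p:ℤ)) (c i) := hcop _ hind
    obtain ⟨u3, w3, huw3⟩ := hcopi
    have : a (i:ℕ) ∈ T (k + nxt (f (i:ℕ))) := by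
      have e9 : a (i:ℕ) = w3 • (c i • a (i:ℕ)) := by
        calc a (i:ℕ) = (u3 * (p:ℤ) + w3 * c i) • a (i:ℕ) := by rw [huw3, one_smul]
          _ = u3 • ((p:ℤ) • a (i:ℕ)) + w3 • (c i • a (i:ℕ)) := by rw [add_smul, mul_smul, mul_smul]
          _ = w3 • (c i • a (i:ℕ)) := by rw [hker, smul_zero, zero_add]
      rw [e9]
      exact AddSubgroup.zsmul_mem _ hmem _
    exact hanot (i:ℕ) this
  obtain ⟨N, hN⟩ := hstab
  set N₀ := k + N with hN₀
  have hTeq : ∀ n, N₀ ≤ n → T n = T N₀ := by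
    intro n hn
    have := hN (n - k) (by omega)
    rw [show k + (n-k) = n from by omega] at this
    exact this
  have claim : ∀ (t : ℕ) (M1 : ℕ), N₀ ≤ M1 → ∀ x : P, x ∈ C M1 → (p:ℤ)^t • x = 0 →
      x ∈ C (M1+1) := by
    intro t
    induction t with
    | zero =>
      intro M1 _ x _ h0
      rw [pow_zero, one_smul] at h0
      rw [h0]
      exact zero_mem _
    | succ t ih =>
      intro M1 hM1 x hx hpx
      have hpxC : (p:ℤ) • x ∈ C (M1+1) := by
        obtain ⟨y, hy⟩ := (hCmem M1 x).1 hx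
        refine (hCmem (M1+1) _).2 ⟨y, ?_⟩
        rw [pow_succ, mul_comm, mul_smul, hy]
      have ht' : (p:ℤ)^t • ((p:ℤ) • x) = 0 := by
        rw [← mul_smul, ← pow_succ]
        exact hpx
      obtain ⟨z, hz⟩ := (hCmem (M1+2) _).1 (ih (M1+1) (by omega) ((p:ℤ) • x) hpxC ht')
      have hdT : x - (p:ℤ)^(M1+1) • z ∈ T M1 := by
        refine AddSubgroup.mem_inf.mpr ⟨?_, ?_⟩
        · refine sub_mem hx (hCanti (by omega) ((hCmem (M1+1) _).2 ⟨z, rfl⟩))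
        · show sm (p:ℤ) _ = 0
          show (p:ℤ) • (x - (p:ℤ)^(M1+1) • z) = 0
          rw [smul_sub, smul_comm, ← hz, ← mul_smul, ← pow_succ]
          exact sub_self _
      have hdT' : x - (p:ℤ)^(M1+1) • z ∈ T (M1+1) := by
        rw [hTeq (M1+1) (by omega)]
        rw [hTeq M1 hM1] at hdT
        exact hdT
      have hdC : x - (p:ℤ)^(M1+1) • z ∈ C (M1+1) := (AddSubgroup.mem_inf.mp hdT').1
      have := add_mem hdC ((hCmem (M1+1) _).2 ⟨z, rfl⟩)
      simpa using this
  have hCeq : ∀ e : ℕ, C (N₀ + e) = C N₀ := by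
    intro e
    induction e with
    | zero => rfl
    | succ e ih =>
      refine le_antisymm (le_trans (hCanti (by omega)) le_rfl) ?_
      rw [← ih]
      intro x hx
      obtain ⟨t, ht⟩ := htor x
      have := claim t (N₀+e) (by omega) x hx ht
      rw [show N₀ + (e+1) = (N₀ + e) + 1 from by omega]
      exact this
  have hdivD : ∀ n : ℕ, 0 < n → ∀ x ∈ C N₀, ∃ y ∈ C N₀, n • y = x := by
    intro n hn x hx
    set e := n.factorization p with he2
    set m := n / p ^ e with hm2
    have hnm : p ^ e * m = n := Nat.ordProj_mul_ordCompl_eq_self n p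
    have hmnd : ¬ p ∣ m := Nat.not_dvd_ordCompl hp hn.ne'
    have hx' : x ∈ C (N₀ + e) := by rw [hCeq e]; exact hx
    obtain ⟨y0, hy0⟩ := (hCmem (N₀+e) x).1 hx'
    set w' : P := (p:ℤ)^N₀ • y0 with hw'
    have hwC : w' ∈ C N₀ := (hCmem N₀ _).2 ⟨y0, rfl⟩
    have hwx : (p:ℤ)^e • w' = x := by
      rw [hw', ← mul_smul, ← pow_add]
      rw [show e + N₀ = N₀ + e from by omega]
      exact hy0
    obtain ⟨t, ht⟩ := htor w'
    have hmZ : ¬ (p:ℤ) ∣ (m:ℤ) := fun hdd => hmnd (by exact_mod_cast hdd)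
    have hcop2 : IsCoprime ((m:ℤ)) ((p:ℤ)^t) := IsCoprime.pow_right (n := t) (hcop _ hmZ).symm
    obtain ⟨u4, w4, h4⟩ := hcop2
    refine ⟨u4 • w', AddSubgroup.zsmul_mem _ hwC _, ?_⟩
    have hmw : (m:ℤ) • (u4 • w') = w' := by
      have e10 : (u4 * (m:ℤ) + w4 * (p:ℤ)^t) • w' = (m:ℤ) • (u4 • w') := by
        rw [add_smul, mul_smul, mul_smul, ht, smul_zero, add_zero, smul_comm]
      rw [← e10, h4, one_smul]
    calc n • (u4 • w') = ((n:ℕ):ℤ) • (u4 • w') := by rw [natCast_zsmul]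
      _ = ((p:ℤ)^e * (m:ℤ)) • (u4 • w') := by rw [← hnm]; push_cast; ring_nf
      _ = (p:ℤ)^e • ((m:ℤ) • (u4 • w')) := by rw [mul_smul]
      _ = x := by rw [hmw, hwx]
  obtain ⟨B, hB⟩ := aux_divisible_isCompl (C N₀) (by
    intro n hn x
    obtain ⟨y, hyC, hy⟩ := hdivD n hn x.1 x.2
    exact ⟨⟨y, hyC⟩, Subtype.ext (by simpa using hy)⟩)
  refine ⟨C N₀, B, hB, hdivD, ⟨p ^ N₀, pow_pos hp.pos N₀, ?_⟩⟩
  intro x hxB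
  have h1' : (p:ℤ)^N₀ • x ∈ C N₀ := (hCmem N₀ _).2 ⟨x, rfl⟩
  have h2' : (p:ℤ)^N₀ • x ∈ B := AddSubgroup.zsmul_mem B hxB _
  have hdis := hB.disjoint
  rw [AddSubgroup.disjoint_def] at hdis
  have h0 : (p:ℤ)^N₀ • x = 0 := hdis h1' h2'
  rw [show ((p^N₀ : ℕ) • x) = ((p:ℤ)^N₀ • x) from by rw [← natCast_zsmul]; push_cast; ring_nf]
  exact h0
end

section
/- An abelian group G decomposes as a direct sum A ⊕ E with A Bassian and E elementary if and only if G has finite torsion-free rank and pT_p is finite for every prime p, where T_p is the p-primary torsion subgroup of G. -/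
open TensorProduct

namespace Stmt5Aux
open AddSubgroup

variable {G : Type*} [AddCommGroup G]

/-- multiplication by `p` as an `AddMonoidHom`. -/
def smulHom (p : ℕ) : G →+ G where
  toFun := fun g => p • g
  map_zero' := smul_zero p
  map_add' := fun a b => smul_add p a b

/-- subgroup of multiples of `p`. -/
def pmul (p : ℕ) : AddSubgroup G := (smulHom p).range

lemma mem_pmul {p : ℕ} {x : G} : x ∈ (pmul p : AddSubgroup G) ↔ ∃ y, p • y = x :=
  AddMonoidHom.mem_range

/-- subgroup killed by `p`. -/
def pKill (p : ℕ) : AddSubgroup G := (smulHom (G := G) p).ker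

lemma mem_pKill {p : ℕ} {x : G} : x ∈ (pKill p : AddSubgroup G) ↔ p • x = 0 :=
  AddMonoidHom.mem_ker

lemma exists_eq_smul_of_coprime {p m : ℕ} (hco : Nat.Coprime p m) {x : G} (hx : m • x = 0) :
    ∃ a : ℤ, p • (a • x) = x := by
  obtain ⟨u, v, huv⟩ := (Nat.isCoprime_iff_coprime.mpr hco)
  refine ⟨u, ?_⟩
  have h1 : (m : ℤ) • x = 0 := by rw [natCast_zsmul, hx]
  calc p • (u • x) = (p : ℤ) • (u • x) := (natCast_zsmul _ p).symm
    _ = (u * p) • x := by rw [smul_smul, mul_comm]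
    _ = (u * p) • x + v • ((m : ℤ) • x) := by rw [h1, smul_zero, add_zero]
    _ = (u * p + v * m) • x := by rw [smul_smul, add_smul]
    _ = x := by rw [huv, one_smul]

lemma eq_zero_of_coprime_smul {p m : ℕ} (hco : Nat.Coprime p m) {x : G}
    (hp : p • x = 0) (hm : m • x = 0) : x = 0 := by
  obtain ⟨a, ha⟩ := exists_eq_smul_of_coprime hco hm
  rw [← ha, smul_comm, hp, smul_zero]

lemma pTorsion_smul_exists {p q : ℕ} (hpq : Nat.Coprime p q) {x : G} (hx : x ∈ pTorsion G q) :
    ∃ a : ℤ, p • (a • x) = x := by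
  obtain ⟨n, hn⟩ := hx
  exact exists_eq_smul_of_coprime (hpq.pow_right n) hn

lemma mem_iSup_pTorsion {n : ℕ} (hn : 0 < n) : ∀ {x : G}, n • x = 0 →
    x ∈ ⨆ q : {q : ℕ // q.Prime}, pTorsion G q.1 := by
  induction n using Nat.strong_induction_on with
  | _ n ih =>
    intro x hx
    rcases eq_or_ne n 1 with rfl | hne
    · rw [one_smul] at hx; subst hx; exact zero_mem _
    · set p := n.minFac with hp
      have pp : p.Prime := Nat.minFac_prime hne
      set k := n.factorization p with hk
      set m := n / p ^ k with hm
      have hmul : p ^ k * m = n := Nat.ordProj_mul_ordCompl_eq_self n p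
      have hco : Nat.Coprime (p ^ k) m :=
        Nat.Coprime.pow_left _ (Nat.coprime_ordCompl pp hn.ne')
      have hmpos : 0 < m := Nat.ordCompl_pos p hn.ne'
      have hkpos : 0 < k := pp.factorization_pos_of_dvd hn.ne' (Nat.minFac_dvd n)
      have hmlt : m < n := by
        calc m < 2 * m := by omega
        _ ≤ p ^ k * m := Nat.mul_le_mul_right m
            (le_trans (Nat.one_lt_two_pow_iff.mpr hkpos.ne') (Nat.pow_le_pow_left pp.two_le k))
        _ = n := hmul
      have h1 : p ^ k • (m • x) = 0 := by rw [smul_smul, hmul, hx]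
      have h2 : m • (p ^ k • x) = 0 := by rw [smul_smul, mul_comm, hmul, hx]
      have hx1 : m • x ∈ ⨆ q : {q : ℕ // q.Prime}, pTorsion G q.1 :=
        le_iSup (fun q : {q : ℕ // q.Prime} => pTorsion G q.1) ⟨p, pp⟩ ⟨k, h1⟩
      have hx2 := ih m hmlt hmpos h2
      obtain ⟨u, v, huv⟩ := Nat.isCoprime_iff_coprime.mpr hco
      have hxx : x = u • ((p ^ k : ℕ) • x) + v • (m • x) := by
        rw [← natCast_zsmul x (p ^ k), ← natCast_zsmul x m, smul_smul, smul_smul,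
          ← add_smul, huv, one_smul]
      rw [hxx]
      exact add_mem (zsmul_mem hx2 u) (zsmul_mem hx1 v)
end Stmt5Aux
namespace Stmt5Aux
open AddSubgroup

variable {G : Type*} [AddCommGroup G]

lemma exists_finsupp_of_mem_iSup {ι : Type*} {S : ι → AddSubgroup G} {x : G}
    (hx : x ∈ ⨆ i, S i) :
    ∃ f : ι →₀ G, (∀ i, f i ∈ S i) ∧ (f.sum fun _ g => g) = x := by
  classical
  rw [iSup_eq_closure] at hx
  refine AddSubgroup.closure_induction
    (p := fun g _ => ∃ f : ι →₀ G, (∀ i, f i ∈ S i) ∧ (f.sum fun _ g => g) = g)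
    ?_ ?_ ?_ ?_ hx
  · rintro y hy
    obtain ⟨_, ⟨i, rfl⟩, hi⟩ := hy
    refine ⟨Finsupp.single i y, fun j => ?_, Finsupp.sum_single_index rfl⟩
    rcases eq_or_ne i j with rfl | hj
    · simpa [Finsupp.single_eq_same] using hi
    · simp only [Finsupp.single_apply, if_neg hj]
      exact zero_mem _
  · exact ⟨0, fun i => zero_mem _, by simp⟩
  · rintro y z - - ⟨f1, hf1, hs1⟩ ⟨f2, hf2, hs2⟩
    refine ⟨f1 + f2, fun i => by simpa using add_mem (hf1 i) (hf2 i), ?_⟩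
    rw [Finsupp.sum_add_index' (fun _ => rfl) (fun _ _ _ => rfl), hs1, hs2]
  · rintro y - ⟨f1, hf1, hs1⟩
    refine ⟨-f1, fun i => by simpa using neg_mem (hf1 i), ?_⟩
    rw [← hs1, Finsupp.sum, Finsupp.sum, Finsupp.support_neg, ← Finset.sum_neg_distrib]
    simp

lemma exists_coprime_kill_of_mem_iSup {p : ℕ} {ι : Type*} {S : ι → AddSubgroup G}
    (hS : ∀ i, ∀ x ∈ S i, ∃ m : ℕ, 0 < m ∧ Nat.Coprime p m ∧ m • x = 0)
    {x : G} (hx : x ∈ ⨆ i, S i) : ∃ m : ℕ, 0 < m ∧ Nat.Coprime p m ∧ m • x = 0 := by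
  rw [iSup_eq_closure] at hx
  refine AddSubgroup.closure_induction
    (p := fun g _ => ∃ m : ℕ, 0 < m ∧ Nat.Coprime p m ∧ m • g = 0) ?_ ?_ ?_ ?_ hx
  · rintro y hy
    obtain ⟨_, ⟨i, rfl⟩, hi⟩ := hy
    exact hS i y hi
  · exact ⟨1, one_pos, Nat.coprime_one_right p, by simp⟩
  · rintro y z - - ⟨m1, hm1, hc1, hk1⟩ ⟨m2, hm2, hc2, hk2⟩
    refine ⟨m1 * m2, Nat.mul_pos hm1 hm2, Nat.Coprime.mul_right hc1 hc2, ?_⟩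
    have e1 : (m1 * m2) • y = 0 := by rw [mul_comm, mul_smul, hk1, smul_zero]
    have e2 : (m1 * m2) • z = 0 := by rw [mul_smul, hk2, smul_zero]
    rw [smul_add, e1, e2, add_zero]
  · rintro y - ⟨m, hm, hc, hk⟩
    exact ⟨m, hm, hc, by rw [smul_neg, hk, neg_zero]⟩

lemma smul_mem_of_mem_closure {s : Set G} (ht : ∀ x ∈ s, ∃ n : ℕ, 0 < n ∧ n • x = 0)
    {x : G} (hx : x ∈ closure s) : ∃ n : ℕ, 0 < n ∧ n • x = 0 := by
  refine AddSubgroup.closure_induction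
    (p := fun g _ => ∃ n : ℕ, 0 < n ∧ n • g = 0) ?_ ?_ ?_ ?_ hx
  · exact ht
  · exact ⟨1, one_pos, by simp⟩
  · rintro y z - - ⟨m1, hm1, hk1⟩ ⟨m2, hm2, hk2⟩
    refine ⟨m1 * m2, Nat.mul_pos hm1 hm2, ?_⟩
    have e1 : (m1 * m2) • y = 0 := by rw [mul_comm, mul_smul, hk1, smul_zero]
    have e2 : (m1 * m2) • z = 0 := by rw [mul_smul, hk2, smul_zero]
    rw [smul_add, e1, e2, add_zero]
  · rintro y - ⟨m, hm, hk⟩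
    exact ⟨m, hm, by rw [smul_neg, hk, neg_zero]⟩

lemma finite_closure_of_torsion {s : Set G} (hs : s.Finite)
    (ht : ∀ x ∈ s, ∃ n : ℕ, 0 < n ∧ n • x = 0) :
    ((closure s : AddSubgroup G) : Set G).Finite := by
  haveI : Finite ↥s := hs.to_subtype
  haveI : AddGroup.FG ↥(closure s) := AddGroup.closure_finite_fg s
  have htor : AddMonoid.IsTorsion ↥(closure s) := by
    intro x
    rw [isOfFinAddOrder_iff_nsmul_eq_zero]
    obtain ⟨n, hn, hx0⟩ := smul_mem_of_mem_closure ht x.2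
    exact ⟨n, hn, Subtype.ext (by rw [AddSubgroup.coe_nsmul]; simpa using hx0)⟩
  haveI : Finite ↥(closure s) := AddCommGroup.finite_of_fg_torsion _ htor
  exact (closure s : Set G).toFinite

lemma finite_of_image_ker {H Q : Type*} [AddCommGroup H] [AddCommGroup Q] (f : H →+ Q)
    (Z : AddSubgroup H) (h1 : (f '' (Z : Set H)).Finite)
    (h2 : ({x : H | x ∈ Z ∧ f x = 0}).Finite) : (Z : Set H).Finite := by
  have hsub : (Z : Set H) ⊆ ⋃ w ∈ f '' (Z : Set H), {z : H | z ∈ Z ∧ f z = w} :=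
    fun z hz => Set.mem_biUnion (Set.mem_image_of_mem f hz) ⟨hz, rfl⟩
  refine Set.Finite.subset (Set.Finite.biUnion h1 ?_) hsub
  rintro w ⟨z0, hz0, rfl⟩
  have hss : {z : H | z ∈ Z ∧ f z = f z0} ⊆ (fun u => z0 + u) '' {x : H | x ∈ Z ∧ f x = 0} := by
    rintro z ⟨hz, hfz⟩
    exact ⟨z - z0, ⟨sub_mem hz hz0, by rw [map_sub, hfz, sub_self]⟩, by simp⟩
  exact Set.Finite.subset (h2.image _) hss

lemma exists_compl_subgroup {B0 Ep : AddSubgroup G} {p : ℕ} (hp : p.Prime)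
    (hdisj : B0 ⊓ Ep = ⊥) (hpmul : (pmul p : AddSubgroup G) ≤ B0) :
    ∃ C : AddSubgroup G, B0 ≤ C ∧ C ⊓ Ep = ⊥ ∧ C ⊔ Ep = ⊤ := by
  obtain ⟨C, hB0C, hCmax⟩ := zorn_le_nonempty₀ {C : AddSubgroup G | B0 ≤ C ∧ C ⊓ Ep = ⊥}
    (fun c hc hchain y hy => by
      refine ⟨sSup c, ⟨le_trans (hc hy).1 (le_sSup hy), ?_⟩, fun z hz => le_sSup hz⟩
      rw [eq_bot_iff]
      rintro x ⟨hx1, hx2⟩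
      obtain ⟨s, hs, hxs⟩ := (AddSubgroup.mem_sSup_of_directedOn ⟨y, hy⟩
        (hchain.directedOn)).mp hx1
      have := (hc hs).2
      rw [eq_bot_iff] at this
      exact this ⟨hxs, hx2⟩)
    B0 ⟨le_rfl, hdisj⟩
  refine ⟨C, hB0C, hCmax.1.2, ?_⟩
  rw [eq_top_iff]
  intro g _
  by_contra hg
  have hgC : g ∉ C := fun h => hg (AddSubgroup.mem_sup_left h)
  have hC' : (C ⊔ zmultiples g) ∈ {C : AddSubgroup G | B0 ≤ C ∧ C ⊓ Ep = ⊥} := by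
    refine ⟨le_trans hCmax.1.1 le_sup_left, ?_⟩
    rw [eq_bot_iff]
    rintro x ⟨hx1, hx2⟩
    obtain ⟨c, hc, z, hz, rfl⟩ := AddSubgroup.mem_sup.mp hx1
    obtain ⟨k, rfl⟩ := AddSubgroup.mem_zmultiples_iff.mp hz
    by_cases hdvd : (p : ℤ) ∣ k
    · obtain ⟨j, rfl⟩ := hdvd
      have hzm : ((p : ℤ) * j) • g ∈ C := by
        have : ((p : ℤ) * j) • g = p • (j • g) := by
          rw [mul_smul, natCast_zsmul]
        rw [this]
        exact hCmax.1.1 (hpmul (mem_pmul.mpr ⟨j • g, rfl⟩))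
      have : c + ((p:ℤ) * j) • g ∈ C ⊓ Ep := ⟨add_mem hc hzm, hx2⟩
      rw [hCmax.1.2] at this
      exact this
    · exfalso
      obtain ⟨u, v, huv⟩ := ((Nat.prime_iff_prime_int.mp hp).coprime_iff_not_dvd.mpr hdvd)
      apply hg
      have hgrw : g = u • ((p:ℤ) • g) + v • (k • g) := by
        rw [smul_smul, smul_smul, ← add_smul, huv, one_smul]
      rw [hgrw]
      have h1 : u • ((p:ℤ) • g) ∈ C := by
        rw [natCast_zsmul]
        exact zsmul_mem (hCmax.1.1 (hpmul (mem_pmul.mpr ⟨g, rfl⟩))) u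
      have h2 : k • g = (c + k • g) - c := by abel
      have h3 : v • (k • g) ∈ C ⊔ Ep := by
        rw [h2]
        exact zsmul_mem (sub_mem (AddSubgroup.mem_sup_right hx2)
          (AddSubgroup.mem_sup_left hc)) v
      exact add_mem (AddSubgroup.mem_sup_left h1) h3
  have hle : C ⊔ zmultiples g ≤ C := hCmax.2 hC' le_sup_left
  exact hgC (hle (AddSubgroup.mem_sup_right (AddSubgroup.mem_zmultiples g)))

end Stmt5Aux
namespace Stmt5Aux
open AddSubgroup TensorProduct

variable {G : Type*} [AddCommGroup G]

/-- torsion subgroup -/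
def tors (G : Type*) [AddCommGroup G] : AddSubgroup G where
  carrier := {x | ∃ n : ℕ, 0 < n ∧ n • x = 0}
  zero_mem' := ⟨1, one_pos, by simp⟩
  add_mem' := by
    rintro a b ⟨m, hm, hma⟩ ⟨n, hn, hnb⟩
    refine ⟨m * n, Nat.mul_pos hm hn, ?_⟩
    have e1 : (m * n) • a = 0 := by rw [mul_comm, mul_smul, hma, smul_zero]
    have e2 : (m * n) • b = 0 := by rw [mul_smul, hnb, smul_zero]
    rw [smul_add, e1, e2, add_zero]
  neg_mem' := by
    rintro a ⟨m, hm, hma⟩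
    exact ⟨m, hm, by rw [smul_neg, hma, neg_zero]⟩

lemma mem_tors {x : G} : x ∈ tors G ↔ ∃ n : ℕ, 0 < n ∧ n • x = 0 := Iff.rfl

lemma ratFlat : Module.Flat ℤ ℚ := IsLocalization.flat ℚ (nonZeroDivisors ℤ)

lemma tmul_eq_zero_of_torsion (q : ℚ) {g : G} (hg : g ∈ tors G) :
    q ⊗ₜ[ℤ] g = (0 : ℚ ⊗[ℤ] G) := by
  obtain ⟨n, hn, h0⟩ := hg
  have h1 : ((n : ℤ) • (q / n)) ⊗ₜ[ℤ] g = (q / n) ⊗ₜ[ℤ] ((n : ℤ) • g) := smul_tmul _ _ _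
  have h2 : (n : ℤ) • (q / (n : ℚ)) = q := by
    rw [zsmul_eq_mul]
    push_cast
    field_simp
  have h3 : (n : ℤ) • g = 0 := by rw [natCast_zsmul, h0]
  rw [← h2, h1, h3, tmul_zero]

lemma one_tmul_ne_zero_of_not_torsion {g : G} (hg : g ∉ tors G) :
    (1 : ℚ) ⊗ₜ[ℤ] g ≠ (0 : ℚ ⊗[ℤ] G) := by
  haveI : Module.Flat ℤ ℚ := ratFlat
  set φ : ℤ →ₗ[ℤ] G :=
    { toFun := fun c => c • g
      map_add' := fun a b => add_smul a b g
      map_smul' := fun a b => by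
        simp only [smul_eq_mul, RingHom.id_apply]
        exact mul_smul a b g } with hφ
  have hinj : Function.Injective φ := by
    intro a b hab
    by_contra hne
    have hd : (a - b) • g = 0 := by
      have : a • g = b • g := hab
      rw [sub_smul, this, sub_self]
    apply hg
    refine ⟨(a - b).natAbs, Int.natAbs_pos.mpr (sub_ne_zero.mpr hne), ?_⟩
    have := Int.natAbs_eq (a - b)
    rcases this with h | h
    · rw [← natCast_zsmul, ← h, hd]
    · rw [← natCast_zsmul, ← neg_neg ((a-b).natAbs : ℤ), ← h, neg_smul, hd, neg_zero]
  have h2 := Module.Flat.lTensor_preserves_injective_linearMap (M := ℚ) φ hinj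
  intro h0
  have he : (LinearMap.lTensor ℚ φ) ((1:ℚ) ⊗ₜ[ℤ] (1:ℤ)) = (1:ℚ) ⊗ₜ[ℤ] g := by
    rw [LinearMap.lTensor_tmul]
    simp [hφ]
  have hz : ((1:ℚ) ⊗ₜ[ℤ] (1:ℤ) : ℚ ⊗[ℤ] ℤ) = 0 := by
    apply h2
    rw [he, h0, map_zero]
  have := congrArg (TensorProduct.rid ℤ ℚ) hz
  rw [map_zero, TensorProduct.rid_tmul] at this
  simp at this

lemma span_one_tmul_eq_top :
    Submodule.span ℚ (Set.range fun g : G => (1:ℚ) ⊗ₜ[ℤ] g) = ⊤ := by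
  rw [Submodule.eq_top_iff']
  intro z
  induction z using TensorProduct.induction_on with
  | zero => exact zero_mem _
  | tmul q g =>
      have h : q ⊗ₜ[ℤ] g = q • ((1:ℚ) ⊗ₜ[ℤ] g) := by
        rw [smul_tmul', smul_eq_mul, mul_one]
      rw [h]
      exact Submodule.smul_mem _ q (Submodule.subset_span ⟨g, rfl⟩)
  | add x y hx hy => exact add_mem hx hy

lemma exists_X (hrk : FiniteRank G) :
    ∃ s : Finset G, ∀ g : G, ∃ N : ℕ, 0 < N ∧
      N • g ∈ tors G ⊔ AddSubgroup.closure (s : Set G) := by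
  classical
  haveI hfin : Module.Finite ℚ (ℚ ⊗[ℤ] G) := Module.rank_lt_aleph0_iff.mp hrk
  have hcomp : IsCompactElement (⊤ : Submodule ℚ (ℚ ⊗[ℤ] G)) :=
    (Submodule.fg_iff_compact _).mp (Module.finite_def.mp hfin)
  have hle : (⊤ : Submodule ℚ (ℚ ⊗[ℤ] G)) ≤
      ⨆ g : G, Submodule.span ℚ {(1:ℚ) ⊗ₜ[ℤ] g} := by
    rw [← Submodule.span_range_eq_iSup, span_one_tmul_eq_top]
  obtain ⟨s, hs⟩ := CompleteLattice.IsCompactElement.exists_finset_of_le_iSup _ hcomp _ hle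
  refine ⟨s, fun g => ?_⟩
  have hg : (1:ℚ) ⊗ₜ[ℤ] g ∈ Submodule.span ℚ (Set.range fun i : ↥s => (1:ℚ) ⊗ₜ[ℤ] (i : G)) := by
    have h1 : (1:ℚ) ⊗ₜ[ℤ] g ∈ ⨆ a ∈ s, Submodule.span ℚ {(1:ℚ) ⊗ₜ[ℤ] a} := hs trivial
    refine (iSup_le fun a => iSup_le fun ha => ?_ : (⨆ a ∈ s, Submodule.span ℚ {(1:ℚ) ⊗ₜ[ℤ] a}) ≤ _) h1
    rw [Submodule.span_le]
    rintro _ rfl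
    exact Submodule.subset_span ⟨⟨a, ha⟩, rfl⟩
  obtain ⟨c, hc⟩ := (Submodule.mem_span_range_iff_exists_fun ℚ).mp hg
  set N : ℕ := ∏ i : ↥s, (c i).den with hN
  have hNpos : 0 < N := Finset.prod_pos (fun i _ => (c i).pos)
  have hint : ∀ i : ↥s, ∃ d : ℤ, (d : ℚ) = c i * N := by
    intro i
    have hdvd : (c i).den ∣ N := Finset.dvd_prod_of_mem _ (Finset.mem_univ i)
    obtain ⟨k, hk⟩ := hdvd
    have hden : ((c i).den : ℚ) ≠ 0 := Nat.cast_ne_zero.mpr (c i).den_nz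
    have hnum := Rat.num_div_den (c i)
    rw [div_eq_iff hden] at hnum
    refine ⟨(c i).num * k, ?_⟩
    push_cast
    rw [hk]
    push_cast
    rw [hnum]
    ring
  choose d hd using hint
  set w : G := N • g - ∑ i : ↥s, d i • (i : G) with hw
  have hwz : (1 : ℚ) ⊗ₜ[ℤ] w = 0 := by
    rw [hw, TensorProduct.tmul_sub]
    have h1 : (1:ℚ) ⊗ₜ[ℤ] (N • g) = (N : ℚ) • ((1:ℚ) ⊗ₜ[ℤ] g) := by
      rw [← natCast_zsmul g N, TensorProduct.tmul_smul, ← Int.cast_smul_eq_zsmul ℚ]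
      norm_num
    have h2 : (1:ℚ) ⊗ₜ[ℤ] (∑ i : ↥s, d i • (i : G))
        = (N : ℚ) • ((1:ℚ) ⊗ₜ[ℤ] g) := by
      rw [TensorProduct.tmul_sum, ← hc, Finset.smul_sum]
      refine Finset.sum_congr rfl (fun i _ => ?_)
      rw [TensorProduct.tmul_smul, ← Int.cast_smul_eq_zsmul ℚ, hd, smul_smul,
        mul_comm (c i) ((N : ℕ) : ℚ)]
    rw [h1, h2, sub_self]
  have hwt : w ∈ tors G := by
    by_contra hwn
    exact one_tmul_ne_zero_of_not_torsion hwn hwz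
  have : N • g = w + ∑ i : ↥s, d i • (i : G) := by rw [hw]; abel
  refine ⟨N, hNpos, ?_⟩
  rw [this]
  refine add_mem (AddSubgroup.mem_sup_left hwt) (AddSubgroup.mem_sup_right ?_)
  exact sum_mem (fun i _ => zsmul_mem (AddSubgroup.subset_closure i.2) (d i))
end Stmt5Aux
namespace Stmt5Aux
open AddSubgroup

variable {G : Type*} [AddCommGroup G]

lemma pKill_le_pTorsion {p : ℕ} : (pKill p : AddSubgroup G) ≤ pTorsion G p := by
  intro x hx
  exact ⟨1, by rw [pow_one]; exact mem_pKill.mp hx⟩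

lemma primary_decomp (p : ℕ) (hp : p.Prime) (s : Finset G)
    (hfin : {x : G | ∃ y ∈ pTorsion G p, x = p • y}.Finite) :
    ∃ F Ep : AddSubgroup G, (F : Set G).Finite ∧ F ≤ pTorsion G p ∧
      Ep ≤ pKill p ∧
      Ep ⊓ (F ⊔ (closure (s : Set G) ⊔ pmul p)) = ⊥ ∧
      pTorsion G p ≤ F ⊔ Ep := by
  classical
  set Sp := {x : G | ∃ y ∈ pTorsion G p, x = p • y} with hSp
  have hch : ∀ x : G, x ∈ Sp → ∃ y, y ∈ pTorsion G p ∧ x = p • y := fun x hx => by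
    obtain ⟨y, hy, hxy⟩ := hx; exact ⟨y, hy, hxy⟩
  choose yy hy1 hy2 using hch
  haveI : Finite ↥Sp := hfin.to_subtype
  set t : Set G := (fun x : ↥Sp => yy x.1 x.2) '' Set.univ with ht
  have htfin : t.Finite := Set.Finite.image _ Set.finite_univ
  have httor : ∀ x ∈ t, ∃ n : ℕ, 0 < n ∧ n • x = 0 := by
    rintro x ⟨a, -, rfl⟩
    obtain ⟨n, hn⟩ := hy1 a.1 a.2
    exact ⟨p ^ n, pow_pos hp.pos n, hn⟩
  set F0 : AddSubgroup G := closure t with hF0def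
  have hF0fin : (F0 : Set G).Finite := finite_closure_of_torsion htfin httor
  have hF0le : F0 ≤ pTorsion G p := by
    rw [hF0def, closure_le]
    rintro x ⟨a, -, rfl⟩
    exact hy1 a.1 a.2
  have hF0 : ∀ g ∈ pTorsion G p, ∃ f ∈ F0, p • g = p • f := by
    intro g hg
    have hmem : p • g ∈ Sp := ⟨g, hg, rfl⟩
    refine ⟨yy (p • g) hmem, ?_, hy2 (p • g) hmem⟩
    exact subset_closure ⟨⟨p • g, hmem⟩, Set.mem_univ _, rfl⟩
  set X : AddSubgroup G := closure (s : Set G) with hX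
  set D : AddSubgroup G := F0 ⊔ (X ⊔ pmul p) with hD
  set Z : AddSubgroup G := pKill p ⊓ D with hZ
  -- key finiteness of Z
  have hZfin : (Z : Set G).Finite := by
    set K : AddSubgroup G := F0 ⊔ pmul p with hK
    set π : G →+ G ⧸ K := QuotientAddGroup.mk' K with hπ
    have hker : ∀ x : G, π x = 0 ↔ x ∈ K := fun x => QuotientAddGroup.eq_zero_iff x
    -- kernel part
    have hZK : {x : G | x ∈ Z ∧ π x = 0} ⊆ (F0 : Set G) := by
      rintro z ⟨hzZ, hz0⟩
      have hzK : z ∈ K := (hker z).mp hz0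
      obtain ⟨f, hf, m, hm, rfl⟩ := AddSubgroup.mem_sup.mp hzK
      obtain ⟨g, hg⟩ := mem_pmul.mp hm
      have hzkill : f + m ∈ pKill p := hzZ.1
      have hzT : f + m ∈ pTorsion G p := pKill_le_pTorsion hzkill
      have hmT : m ∈ pTorsion G p := by
        have := sub_mem hzT (hF0le hf)
        simpa using this
      have hgT : g ∈ pTorsion G p := by
        obtain ⟨n, hn⟩ := hmT
        refine ⟨n + 1, ?_⟩
        have hps : p ^ (n + 1) • g = p ^ n • (p • g) := by rw [pow_succ, mul_smul]
        rw [hps, hg, hn]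
      obtain ⟨f', hf', hpf'⟩ := hF0 g hgT
      rw [← hg, hpf']
      exact add_mem hf (nsmul_mem hf' p)
    -- image part
    have hMfg : (Submodule.span ℤ (π '' (s : Set G))).FG :=
      Submodule.fg_span ((s.finite_toSet).image _)
    set M : Submodule ℤ (G ⧸ K) := Submodule.span ℤ (π '' (s : Set G)) with hM
    set Nsub : Submodule ℤ (G ⧸ K) := M ⊓ Submodule.torsionBy ℤ (G ⧸ K) (p : ℤ) with hNsub
    have hNfg : Nsub.FG := by
      haveI := isNoetherian_of_fg_of_noetherian M hMfg
      have h1 : (Submodule.comap M.subtype Nsub).FG := IsNoetherian.noetherian _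
      have h2 := Submodule.FG.map M.subtype h1
      rw [Submodule.map_comap_subtype] at h2
      have : M ⊓ Nsub = Nsub := inf_eq_right.mpr inf_le_left
      rwa [this] at h2
    have hNfin : ((Nsub : Set (G ⧸ K))).Finite := by
      obtain ⟨tt, htt⟩ := hNfg
      have hset : (Nsub : Set (G ⧸ K)) = (AddSubgroup.closure (tt : Set (G ⧸ K)) : Set (G ⧸ K)) := by
        rw [← htt, ← Submodule.span_int_eq_addSubgroupClosure]
        rfl
      rw [hset]
      refine finite_closure_of_torsion tt.finite_toSet ?_
      intro x hx
      have hxN : x ∈ Nsub := by rw [← htt]; exact Submodule.subset_span hx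
      have h2' : (p : ℤ) • x = 0 := (Submodule.mem_torsionBy_iff _ _).mp hxN.2
      exact ⟨p, hp.pos, by rw [← natCast_zsmul x p]; exact h2'⟩
    have himg : (π '' (Z : Set G)) ⊆ (Nsub : Set (G ⧸ K)) := by
      rintro _ ⟨z, hz, rfl⟩
      constructor
      · -- π z ∈ M
        obtain ⟨f, hf, w, hw, rfl⟩ := AddSubgroup.mem_sup.mp hz.2
        obtain ⟨ξ, hξ, m, hm, rfl⟩ := AddSubgroup.mem_sup.mp hw
        have hπf : π f = 0 := (hker f).mpr (AddSubgroup.mem_sup_left hf)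
        have hπm : π m = 0 := (hker m).mpr (AddSubgroup.mem_sup_right hm)
        have : π (f + (ξ + m)) = π ξ := by
          rw [map_add, map_add, hπf, hπm, zero_add, add_zero]
        rw [this]
        have hmem : π ξ ∈ AddSubgroup.map π X := ⟨ξ, hξ, rfl⟩
        rw [hX, AddMonoidHom.map_closure] at hmem
        have hMA : (AddSubgroup.closure (π '' (s : Set G))) = M.toAddSubgroup := by
          rw [hM, ← Submodule.span_int_eq_addSubgroupClosure]
        rw [hMA] at hmem
        exact hmem
      · refine (Submodule.mem_torsionBy_iff _ _).mpr ?_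
        have hzz : p • z = 0 := mem_pKill.mp hz.1
        rw [natCast_zsmul, ← map_nsmul, hzz, map_zero]
    exact finite_of_image_ker π Z (Set.Finite.subset hNfin himg)
      (Set.Finite.subset hF0fin hZK)
  have hZD : Z ≤ D := inf_le_right
  have hZkill : Z ≤ pKill p := inf_le_left
  set F : AddSubgroup G := F0 ⊔ Z with hF
  have hFfin : (F : Set G).Finite := by
    have hsub : (F : Set G) ⊆ Set.image2 (· + ·) (F0 : Set G) (Z : Set G) := by
      intro x hx
      obtain ⟨a, ha, b, hb, rfl⟩ := AddSubgroup.mem_sup.mp hx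
      exact ⟨a, ha, b, hb, rfl⟩
    exact Set.Finite.subset (Set.Finite.image2 _ hF0fin hZfin) hsub
  have hFle : F ≤ pTorsion G p := sup_le hF0le (le_trans hZkill pKill_le_pTorsion)
  -- Zorn for Ep
  obtain ⟨Ep, -, hEpmax⟩ := zorn_le_nonempty₀
    {E : AddSubgroup G | E ≤ pKill p ∧ E ⊓ D = ⊥}
    (fun c hc hchain y hy => by
      refine ⟨sSup c, ⟨?_, ?_⟩, fun z hz => le_sSup hz⟩
      · exact sSup_le (fun z hz => (hc hz).1)
      · rw [eq_bot_iff]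
        rintro x ⟨hx1, hx2⟩
        obtain ⟨e, he, hxe⟩ := (AddSubgroup.mem_sSup_of_directedOn ⟨y, hy⟩
          hchain.directedOn).mp hx1
        have := (hc he).2
        rw [eq_bot_iff] at this
        exact this ⟨hxe, hx2⟩)
    ⊥ ⟨bot_le, by rw [bot_inf_eq]⟩
  have hEpkill : Ep ≤ pKill p := hEpmax.1.1
  have hEpD : Ep ⊓ D = ⊥ := hEpmax.1.2
  -- socle is contained in Ep ⊔ D
  have hsoc : ∀ z ∈ (pKill p : AddSubgroup G), z ∈ Ep ⊔ D := by
    intro z hz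
    by_contra hzn
    have hE' : (Ep ⊔ zmultiples z) ∈ {E : AddSubgroup G | E ≤ pKill p ∧ E ⊓ D = ⊥} := by
      constructor
      · refine sup_le hEpkill ?_
        intro w hw
        obtain ⟨k, rfl⟩ := AddSubgroup.mem_zmultiples_iff.mp hw
        rw [mem_pKill, smul_comm, mem_pKill.mp hz, smul_zero]
      · rw [eq_bot_iff]
        rintro x ⟨hx1, hx2⟩
        obtain ⟨e, he, w, hw, rfl⟩ := AddSubgroup.mem_sup.mp hx1
        obtain ⟨k, rfl⟩ := AddSubgroup.mem_zmultiples_iff.mp hw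
        by_cases hdvd : (p : ℤ) ∣ k
        · obtain ⟨j, rfl⟩ := hdvd
          have hkz : ((p : ℤ) * j) • z = 0 := by
            rw [mul_comm, mul_smul, natCast_zsmul, mem_pKill.mp hz, smul_zero]
          rw [hkz, add_zero] at hx2 ⊢
          have : e ∈ Ep ⊓ D := ⟨he, hx2⟩
          rw [hEpD] at this
          exact this
        · exfalso
          apply hzn
          obtain ⟨u, v, huv⟩ := ((Nat.prime_iff_prime_int.mp hp).coprime_iff_not_dvd.mpr hdvd)
          have hzrw : z = u • ((p : ℤ) • z) + v • (k • z) := by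
            rw [smul_smul, smul_smul, ← add_smul, huv, one_smul]
          have hpz : (p : ℤ) • z = 0 := by rw [natCast_zsmul, mem_pKill.mp hz]
          have hkz : k • z = (e + k • z) - e := by abel
          rw [hzrw, hpz, smul_zero, zero_add, hkz, smul_sub]
          exact sub_mem (zsmul_mem (AddSubgroup.mem_sup_right hx2) v)
            (zsmul_mem (AddSubgroup.mem_sup_left he) v)
    have hle : Ep ⊔ zmultiples z ≤ Ep := hEpmax.2 hE' le_sup_left
    exact hzn (AddSubgroup.mem_sup_left (hle
      (AddSubgroup.mem_sup_right (AddSubgroup.mem_zmultiples z))))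
  -- socle is contained in F ⊔ Ep
  have hsoc2 : ∀ z ∈ (pKill p : AddSubgroup G), z ∈ F ⊔ Ep := by
    intro z hz
    obtain ⟨e, he, dd, hdd, rfl⟩ := AddSubgroup.mem_sup.mp (hsoc z hz)
    have hddk : dd ∈ pKill p := by
      have h1 : e + dd ∈ pKill p := hz
      have := sub_mem h1 (hEpkill he)
      simpa using this
    have hddZ : dd ∈ Z := ⟨hddk, hdd⟩
    exact add_mem (AddSubgroup.mem_sup_right he)
      (AddSubgroup.mem_sup_left (AddSubgroup.mem_sup_right hddZ))
  -- done, assemble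
  refine ⟨F, Ep, hFfin, hFle, hEpkill, ?_, ?_⟩
  · have hFXD : F ⊔ (X ⊔ pmul p) = D := by
      apply le_antisymm
      · refine sup_le (sup_le le_sup_left (le_trans hZD le_rfl)) le_sup_right
      · exact sup_le (le_trans le_sup_left le_sup_left) le_sup_right
    rw [hX] at hFXD ⊢
    rw [hFXD, hEpD]
  · intro g hg
    obtain ⟨f, hf, hpf⟩ := hF0 g hg
    have hgf : g - f ∈ pKill p := by
      rw [mem_pKill, smul_sub, hpf, sub_self]
    have := hsoc2 _ hgf
    have hgrw : g = f + (g - f) := by abel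
    rw [hgrw]
    exact add_mem (AddSubgroup.mem_sup_left (AddSubgroup.mem_sup_left hf)) this
end Stmt5Aux
namespace Stmt5Aux
open AddSubgroup

variable {G : Type*} [AddCommGroup G]

lemma exists_decomp (hrk : FiniteRank G)
    (hfin : ∀ p : ℕ, p.Prime → {x : G | ∃ y ∈ pTorsion G p, x = p • y}.Finite) :
    ∃ A E : AddSubgroup G, IsCompl A E ∧ Bassian ↥A ∧ Elementary ↥E := by
  classical
  obtain ⟨s, hs⟩ := exists_X (G := G) hrk
  have hPD : ∀ q : {q : ℕ // q.Prime}, ∃ F Ep : AddSubgroup G,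
      (F : Set G).Finite ∧ F ≤ pTorsion G q.1 ∧ Ep ≤ pKill q.1 ∧
      Ep ⊓ (F ⊔ (closure (s : Set G) ⊔ pmul q.1)) = ⊥ ∧
      pTorsion G q.1 ≤ F ⊔ Ep :=
    fun q => primary_decomp q.1 q.2 s (hfin q.1 q.2)
  choose F Ee hFfin hFle hEkill hEdisj hTple using hPD
  set X : AddSubgroup G := closure (s : Set G) with hX
  set E : AddSubgroup G := ⨆ q, Ee q with hE
  -- each Ee q is killed by q
  have hEk : ∀ q : {q : ℕ // q.Prime}, ∀ x ∈ Ee q, q.1 • x = 0 :=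
    fun q x hx => mem_pKill.mp (hEkill q hx)
  -- cross-prime divisibility
  have hEpmul : ∀ q r : {q : ℕ // q.Prime}, q ≠ r → Ee q ≤ pmul r.1 := by
    intro q r hqr x hx
    have hco : Nat.Coprime r.1 q.1 :=
      (Nat.coprime_primes r.2 q.2).mpr (fun h => hqr (Subtype.ext h.symm))
    obtain ⟨a, ha⟩ := exists_eq_smul_of_coprime hco (hEk q x hx)
    exact mem_pmul.mpr ⟨a • x, ha⟩
  have hTpmul : ∀ q r : {q : ℕ // q.Prime}, q ≠ r → pTorsion G q.1 ≤ pmul r.1 := by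
    intro q r hqr x hx
    have hco : Nat.Coprime r.1 q.1 :=
      (Nat.coprime_primes r.2 q.2).mpr (fun h => hqr (Subtype.ext h.symm))
    obtain ⟨a, ha⟩ := pTorsion_smul_exists hco hx
    exact mem_pmul.mpr ⟨a • x, ha⟩
  -- the complements C q
  have hCex : ∀ q : {q : ℕ // q.Prime}, ∃ C : AddSubgroup G,
      ((F q ⊔ (X ⊔ pmul q.1)) ⊔ (⨆ r : {r : {q : ℕ // q.Prime} // r ≠ q}, Ee r.1)) ≤ C ∧
      C ⊓ Ee q = ⊥ ∧ C ⊔ Ee q = ⊤ := by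
    intro q
    have hSle : (⨆ r : {r : {q : ℕ // q.Prime} // r ≠ q}, Ee r.1) ≤ pmul q.1 :=
      iSup_le (fun r => hEpmul r.1 q r.2)
    have hbase : ((F q ⊔ (X ⊔ pmul q.1)) ⊔ (⨆ r : {r : {q : ℕ // q.Prime} // r ≠ q}, Ee r.1))
        ≤ F q ⊔ (X ⊔ pmul q.1) :=
      sup_le le_rfl (le_trans hSle (le_trans le_sup_right le_sup_right))
    have hdisj : ((F q ⊔ (X ⊔ pmul q.1)) ⊔ (⨆ r : {r : {q : ℕ // q.Prime} // r ≠ q}, Ee r.1))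
        ⊓ Ee q = ⊥ := by
      rw [eq_bot_iff]
      rintro x ⟨hx1, hx2⟩
      have : x ∈ Ee q ⊓ (F q ⊔ (X ⊔ pmul q.1)) := ⟨hx2, hbase hx1⟩
      rw [hEdisj q] at this
      exact this
    obtain ⟨CC, h1, h2, h3⟩ := exists_compl_subgroup q.2 hdisj
      (le_trans (le_trans le_sup_right le_sup_right) le_sup_left)
    exact ⟨CC, h1, h2, h3⟩
  choose C hbaseC hCdisj hCsup using hCex
  set A : AddSubgroup G := ⨅ q, C q with hA
  -- basic membership facts for C
  have hXC : ∀ q, X ≤ C q := fun q =>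
    le_trans (le_trans le_sup_left le_sup_right) (le_trans le_sup_left (hbaseC q))
  have hpmulC : ∀ q, pmul q.1 ≤ C q := fun q =>
    le_trans (le_trans le_sup_right le_sup_right) (le_trans le_sup_left (hbaseC q))
  have hFC : ∀ q r : {q : ℕ // q.Prime}, F r ≤ C q := by
    intro q r
    rcases eq_or_ne r q with rfl | hne
    · exact le_trans le_sup_left (le_trans le_sup_left (hbaseC r))
    · exact le_trans (hFle r) (le_trans (hTpmul r q hne) (hpmulC q))
  have hEeC : ∀ q r : {q : ℕ // q.Prime}, r ≠ q → Ee r ≤ C q := by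
    intro q r hne
    refine le_trans ?_ (le_trans le_sup_right (hbaseC q))
    exact le_iSup (fun r : {r : {q : ℕ // q.Prime} // r ≠ q} => Ee r.1) ⟨r, hne⟩
  -- disjointness
  have hAE : A ⊓ E = ⊥ := by
    rw [eq_bot_iff]
    rintro x ⟨hxA, hxE⟩
    obtain ⟨f, hf, hsum⟩ := exists_finsupp_of_mem_iSup hxE
    have hzero : ∀ q, f q = 0 := by
      intro q
      by_cases hq : q ∈ f.support
      · have hx : x = f q + ∑ r ∈ f.support.erase q, f r := by
          rw [← hsum, Finsupp.sum, ← Finset.add_sum_erase _ _ hq]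
        have hrest : ∑ r ∈ f.support.erase q, f r ∈ C q :=
          sum_mem (fun r hr => hEeC q r (Finset.ne_of_mem_erase hr) (hf r))
        have hxC : x ∈ C q := AddSubgroup.mem_iInf.mp hxA q
        have hfq : f q ∈ C q := by
          have : f q = x - ∑ r ∈ f.support.erase q, f r := by rw [hx]; abel
          rw [this]
          exact sub_mem hxC hrest
        have : f q ∈ C q ⊓ Ee q := ⟨hfq, hf q⟩
        rw [hCdisj q] at this
        exact this
      · exact Finsupp.notMem_support_iff.mp hq
    have hf0 : f = 0 := Finsupp.ext hzero
    have hx0 : x = 0 := by rw [← hsum, hf0, Finsupp.sum_zero_index]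
    rw [hx0]
    exact zero_mem ⊥
  -- sum
  have hsup : A ⊔ E = ⊤ := by
    rw [eq_top_iff]
    intro g _
    obtain ⟨N, hN, hNg⟩ := hs g
    obtain ⟨tt, htt, ξ, hξ, hNgeq⟩ := AddSubgroup.mem_sup.mp hNg
    obtain ⟨n, hn, hkill⟩ := mem_tors.mp htt
    have htt2 : tt ∈ ⨆ q : {q : ℕ // q.Prime}, (F q ⊔ Ee q) := by
      have h1 := mem_iSup_pTorsion hn hkill
      exact (iSup_mono (fun q => hTple q)) h1
    obtain ⟨f, hf, hsum⟩ := exists_finsupp_of_mem_iSup htt2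
    -- the exceptional finite set of primes
    set T0 : Finset {q : ℕ // q.Prime} := f.support ∪
      (N.primeFactors.attach.image
        (fun r => (⟨r.1, Nat.prime_of_mem_primeFactors r.2⟩ : {q : ℕ // q.Prime}))) with hT0
    have hgC : ∀ q, q ∉ T0 → g ∈ C q := by
      intro q hq
      have hq1 : q ∉ f.support := fun h => hq (Finset.mem_union_left _ h)
      have hq2 : ¬ (q.1 ∣ N) := by
        intro hdvd
        refine hq (Finset.mem_union_right _ ?_)
        have hmem : q.1 ∈ N.primeFactors := Nat.mem_primeFactors.mpr ⟨q.2, hdvd, hN.ne'⟩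
        exact Finset.mem_image.mpr ⟨⟨q.1, hmem⟩, Finset.mem_attach _ _, rfl⟩
      have httC : tt ∈ C q := by
        rw [← hsum, Finsupp.sum]
        refine sum_mem (fun r hr => ?_)
        have hrq : r ≠ q := fun h => hq1 (h ▸ hr)
        exact (sup_le (hFC q r) (hEeC q r hrq)) (hf r)
      have hNgC : N • g ∈ C q := by
        rw [← hNgeq]
        exact add_mem httC (hXC q hξ)
      -- Bezout to get g ∈ C q
      have hco : Nat.Coprime q.1 N := (Nat.Prime.coprime_iff_not_dvd q.2).mpr hq2
      obtain ⟨u, v, huv⟩ := Nat.isCoprime_iff_coprime.mpr hco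
      have hgrw : g = u • (q.1 • g) + v • (N • g) := by
        rw [← natCast_zsmul g q.1, ← natCast_zsmul g N, smul_smul, smul_smul,
          ← add_smul, huv, one_smul]
      rw [hgrw]
      exact add_mem (zsmul_mem (hpmulC q (mem_pmul.mpr ⟨g, rfl⟩)) u)
        (zsmul_mem hNgC v)
    -- for exceptional primes, write g = c + ε
    have hsplit : ∀ q : {q : ℕ // q.Prime}, ∃ cc ∈ C q, ∃ ee ∈ Ee q, cc + ee = g := by
      intro q
      have : g ∈ C q ⊔ Ee q := by rw [hCsup q]; trivial
      exact AddSubgroup.mem_sup.mp this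
    choose cc hcc ee hee hcceq using hsplit
    set a : G := g - ∑ q ∈ T0, ee q with ha
    have haA : a ∈ A := by
      rw [AddSubgroup.mem_iInf]
      intro r
      by_cases hr : r ∈ T0
      · have harw : a = cc r - ∑ q ∈ T0.erase r, ee q := by
          rw [ha, ← Finset.add_sum_erase _ _ hr, ← hcceq r]
          abel
        rw [harw]
        exact sub_mem (hcc r) (sum_mem (fun q hq =>
          hEeC r q (Finset.ne_of_mem_erase hq) (hee q)))
      · exact sub_mem (hgC r hr) (sum_mem (fun q hq =>
          hEeC r q (fun h => hr (h ▸ hq)) (hee q)))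
    have hgeq : g = a + ∑ q ∈ T0, ee q := by rw [ha]; abel
    rw [hgeq]
    refine add_mem (AddSubgroup.mem_sup_left haA) (AddSubgroup.mem_sup_right ?_)
    exact sum_mem (fun q _ => (le_iSup Ee q) (hee q))
  -- Bassian A
  have hBassian : Bassian ↥A := by
    constructor
    · -- finite rank
      haveI : Module.Flat ℤ ℚ := ratFlat
      set ι : ↥A →ₗ[ℤ] G := A.subtype.toIntLinearMap with hι
      have hinj : Function.Injective ι := Subtype.coe_injective
      have hinj2 : Function.Injective (LinearMap.baseChange ℚ ι) := by
        rw [LinearMap.baseChange_eq_ltensor]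
        exact Module.Flat.lTensor_preserves_injective_linearMap (M := ℚ) ι hinj
      exact lt_of_le_of_lt (LinearMap.rank_le_of_injective _ hinj2) hrk
    · intro p pp
      set q : {q : ℕ // q.Prime} := ⟨p, pp⟩ with hq
      -- the set of A-elements that are p-power torsion in G
      set V : Set G := {x : G | x ∈ A ∧ x ∈ pTorsion G p} with hV
      have hVfin : V.Finite := by
        have hchoice : ∀ x : G, x ∈ V → ∃ fx ∈ F q, ∃ ex ∈ Ee q, fx + ex = x :=
          fun x hx => AddSubgroup.mem_sup.mp (hTple q hx.2)
        choose fx hfx ex hex hfxeq using hchoice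
        have hinj : Set.InjOn (fun x : G => if h : x ∈ V then fx x h else 0) V := by
          intro x hxV y hyV hxy
          simp only [dif_pos hxV, dif_pos hyV] at hxy
          have h1 : x - y = ex x hxV - ex y hyV := by
            calc x - y = (fx x hxV + ex x hxV) - (fx y hyV + ex y hyV) := by
                  rw [hfxeq x hxV, hfxeq y hyV]
            _ = ex x hxV - ex y hyV := by rw [hxy]; abel
          have hsub : x - y ∈ C q ⊓ Ee q :=
            AddSubgroup.mem_inf.mpr
              ⟨sub_mem (AddSubgroup.mem_iInf.mp hxV.1 q) (AddSubgroup.mem_iInf.mp hyV.1 q),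
               by rw [h1]; exact sub_mem (hex x hxV) (hex y hyV)⟩
          rw [hCdisj q] at hsub
          have : x - y = 0 := hsub
          have := sub_eq_zero.mp this
          exact this
        refine Set.Finite.of_finite_image ?_ hinj
        refine Set.Finite.subset (hFfin q) ?_
        rintro _ ⟨x, hx, rfl⟩
        simp only [dif_pos hx]
        exact hfx x hx
      have hpre : (pTorsion ↥A p : Set ↥A) ⊆ (Subtype.val) ⁻¹' V := by
        rintro x ⟨n, hn⟩
        refine ⟨x.2, ⟨n, ?_⟩⟩
        have : ((p ^ n • x : ↥A) : G) = p ^ n • (x : G) := AddSubgroup.coe_nsmul _ _ _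
        rw [← this, hn]
        rfl
      exact Set.Finite.subset (Set.Finite.preimage
        (Set.injOn_of_injective Subtype.coe_injective) hVfin) hpre
  -- Elementary E
  have hElem : Elementary ↥E := by
    constructor
    · intro x
      rw [isOfFinAddOrder_iff_nsmul_eq_zero]
      have hx : (x : G) ∈ ⨆ q, Ee q := x.2
      obtain ⟨m, hm, -, hkill⟩ := exists_coprime_kill_of_mem_iSup (p := 1)
        (fun q y hy => ⟨q.1, q.2.pos, Nat.coprime_one_left _, hEk q y hy⟩) hx
      exact ⟨m, hm, Subtype.ext (by rw [AddSubgroup.coe_nsmul]; simpa using hkill)⟩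
    · intro p pp x hx
      obtain ⟨n, hn⟩ := hx
      set q : {q : ℕ // q.Prime} := ⟨p, pp⟩ with hq
      have hnG : p ^ n • (x : G) = 0 := by
        have : ((p ^ n • x : ↥E) : G) = p ^ n • (x : G) := AddSubgroup.coe_nsmul _ _ _
        rw [← this, hn]
        rfl
      rcases Nat.eq_zero_or_pos n with rfl | hnpos
      · have : (x : G) = 0 := by simpa using hnG
        refine Subtype.ext ?_
        rw [AddSubgroup.coe_nsmul, this, smul_zero]
        rfl
      obtain ⟨f, hf, hsum⟩ := exists_finsupp_of_mem_iSup (x.2 : (x : G) ∈ ⨆ q, Ee q)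
      set y : G := (x : G) - f q with hy
      have hymem : y ∈ ⨆ r : {r : {q : ℕ // q.Prime} // r ≠ q}, Ee r.1 := by
        have hyeq : y = ∑ r ∈ f.support.erase q, f r := by
          by_cases hqs : q ∈ f.support
          · rw [hy, ← hsum, Finsupp.sum, ← Finset.add_sum_erase _ _ hqs]
            abel
          · rw [hy, ← hsum, Finsupp.sum, Finset.erase_eq_of_notMem hqs,
              Finsupp.notMem_support_iff.mp hqs, sub_zero]
        rw [hyeq]
        refine sum_mem (fun r hr => ?_)
        exact (le_iSup (fun r : {r : {q : ℕ // q.Prime} // r ≠ q} => Ee r.1)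
          ⟨r, Finset.ne_of_mem_erase hr⟩) (hf r)
      obtain ⟨m, hm, hco, hkill⟩ := exists_coprime_kill_of_mem_iSup (p := p)
        (fun r z hz => ⟨r.1.1, r.1.2.pos,
          (Nat.coprime_primes pp r.1.2).mpr (fun h => r.2 (Subtype.ext h.symm)),
          hEk r.1 z hz⟩) hymem
      have hpy : p ^ n • y = 0 := by
        rw [hy, smul_sub, hnG]
        have hfq : p ^ n • f q = 0 := by
          obtain ⟨n', rfl⟩ := Nat.exists_eq_succ_of_ne_zero hnpos.ne'
          rw [pow_succ, mul_smul, hEk q (f q) (hf q), smul_zero]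
        rw [hfq]
        simp
      have hy0 : y = 0 := eq_zero_of_coprime_smul (Nat.Coprime.pow_left n hco) hpy hkill
      have hxfq : (x : G) = f q := by
        have := hy0
        rw [hy] at this
        exact sub_eq_zero.mp this
      refine Subtype.ext ?_
      rw [AddSubgroup.coe_nsmul, hxfq, hEk q (f q) (hf q)]
      rfl
  exact ⟨A, E, ⟨disjoint_iff.mpr hAE, codisjoint_iff.mpr hsup⟩, hBassian, hElem⟩
end Stmt5Aux
namespace Stmt5Aux
open AddSubgroup TensorProduct

variable {G : Type*} [AddCommGroup G]

lemma decomp_to_conditions {A E : AddSubgroup G} (hc : IsCompl A E)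
    (hA : Bassian ↥A) (hE : Elementary ↥E) :
    FiniteRank G ∧ ∀ p : ℕ, p.Prime →
      {x : G | ∃ y ∈ pTorsion G p, x = p • y}.Finite := by
  classical
  have hsup : A ⊔ E = ⊤ := codisjoint_iff.mp hc.codisjoint
  have hdisj : A ⊓ E = ⊥ := disjoint_iff.mp hc.disjoint
  constructor
  · -- finite rank
    set ι : ↥A →ₗ[ℤ] G := A.subtype.toIntLinearMap with hι
    have hsurj : Function.Surjective (LinearMap.baseChange ℚ ι) := by
      intro z
      induction z using TensorProduct.induction_on with
      | zero => exact ⟨0, map_zero _⟩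
      | tmul r g =>
          have hg : g ∈ A ⊔ E := by rw [hsup]; trivial
          obtain ⟨a, haA, e, heE, hae⟩ := AddSubgroup.mem_sup.mp hg
          have het : e ∈ tors G := by
            have := hE.1 ⟨e, heE⟩
            rw [isOfFinAddOrder_iff_nsmul_eq_zero] at this
            obtain ⟨n, hn, h0⟩ := this
            refine ⟨n, hn, ?_⟩
            have : ((n • (⟨e, heE⟩ : ↥E) : ↥E) : G) = n • e := AddSubgroup.coe_nsmul _ _ _
            rw [← this, h0]
            rfl
          refine ⟨r ⊗ₜ[ℤ] (⟨a, haA⟩ : ↥A), ?_⟩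
          rw [LinearMap.baseChange_tmul]
          have h1 : ι (⟨a, haA⟩ : ↥A) = a := rfl
          rw [h1, ← hae, TensorProduct.tmul_add, tmul_eq_zero_of_torsion r het, add_zero]
      | add x y hx hy =>
          obtain ⟨x', hx'⟩ := hx
          obtain ⟨y', hy'⟩ := hy
          exact ⟨x' + y', by rw [map_add, hx', hy']⟩
    exact lt_of_le_of_lt (LinearMap.rank_le_of_surjective _ hsurj) hA.1
  · intro p pp
    have hsub : {x : G | ∃ y ∈ pTorsion G p, x = p • y} ⊆
        (fun a : ↥A => p • (a : G)) '' (pTorsion ↥A p : Set ↥A) := by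
      rintro _ ⟨y, hy, rfl⟩
      have hg : y ∈ A ⊔ E := by rw [hsup]; trivial
      obtain ⟨a, haA, e, heE, hae⟩ := AddSubgroup.mem_sup.mp hg
      obtain ⟨n, hn⟩ := hy
      have hna : p ^ n • a ∈ A := nsmul_mem haA _
      have hne : p ^ n • e ∈ E := nsmul_mem heE _
      have hkey : p ^ n • a = - (p ^ n • e) := by
        have : p ^ n • a + p ^ n • e = 0 := by
          rw [← smul_add, hae, hn]
        linear_combination (norm := abel) this
      have hzA : p ^ n • a ∈ A ⊓ E := AddSubgroup.mem_inf.mpr ⟨hna, by rw [hkey]; exact neg_mem hne⟩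
      rw [hdisj] at hzA
      have ha0 : p ^ n • a = 0 := hzA
      have he0 : p ^ n • e = 0 := by
        have := hkey
        rw [ha0] at this
        have := this.symm
        rw [neg_eq_zero] at this  -- careful orientation
        exact this
      have haT : (⟨a, haA⟩ : ↥A) ∈ pTorsion ↥A p :=
        ⟨n, Subtype.ext (by rw [AddSubgroup.coe_nsmul]; simpa using ha0)⟩
      have heT : (⟨e, heE⟩ : ↥E) ∈ pTorsion ↥E p :=
        ⟨n, Subtype.ext (by rw [AddSubgroup.coe_nsmul]; simpa using he0)⟩
      have hpe : p • e = 0 := by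
        have := hE.2 p pp _ heT
        have h2 : ((p • (⟨e, heE⟩ : ↥E) : ↥E) : G) = p • e := AddSubgroup.coe_nsmul _ _ _
        rw [this] at h2
        exact h2.symm
      refine ⟨⟨a, haA⟩, haT, ?_⟩
      rw [← hae, smul_add, hpe, add_zero]
    exact Set.Finite.subset (Set.Finite.image _ (hA.2 p pp)) hsub

end Stmt5Aux

/-- G = A ⊕ E with A Bassian and E elementary iff G has finite
torsion-free rank and pT_p is finite for all primes p. -/
theorem stmt5 {G : Type*} [AddCommGroup G] :
    (∃ A E : AddSubgroup G, IsCompl A E ∧ Bassian ↥A ∧ Elementary ↥E) ↔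
      (FiniteRank G ∧ ∀ p : ℕ, p.Prime →
        {x : G | ∃ y ∈ pTorsion G p, x = p • y}.Finite) := by
  constructor
  · rintro ⟨A, E, hc, hA, hE⟩
    exact Stmt5Aux.decomp_to_conditions hc hA hE
  · rintro ⟨h1, h2⟩
    exact Stmt5Aux.exists_decomp h1 h2
end

section
/- Every generalized Bassian abelian group has finite torsion-free rank. -/
open TensorProduct

namespace Stmt8Aux

open Finsupp

/-- surjectivity building block: every rational is an integer multiple of `1/n!`. -/
lemma rat_aux (q : ℚ) : ∃ (n : ℕ) (k : ℤ), k • ((n.factorial : ℚ))⁻¹ = q := by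
  refine ⟨q.den, q.num * ((q.den.factorial / q.den : ℕ) : ℤ), ?_⟩
  have hd : (q.den : ℚ) ≠ 0 := Nat.cast_ne_zero.mpr q.den_nz
  have hfac : q.den ∣ q.den.factorial := Nat.dvd_factorial q.pos le_rfl
  have hfac0 : (q.den.factorial : ℚ) ≠ 0 := Nat.cast_ne_zero.mpr (Nat.factorial_ne_zero _)
  have h1 : ((q.den.factorial / q.den : ℕ) : ℚ) = (q.den.factorial : ℚ) / q.den := by
    rw [Nat.cast_div hfac hd]
  rw [zsmul_eq_mul]
  rw [Int.cast_mul, Int.cast_natCast, h1]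
  calc (q.num : ℚ) * ((q.den.factorial : ℚ) / q.den) * ((q.den.factorial : ℚ))⁻¹
      = ((q.num : ℚ) / q.den) * ((q.den.factorial : ℚ) * ((q.den.factorial : ℚ))⁻¹) := by ring
    _ = (q.num : ℚ) / q.den := by rw [mul_inv_cancel₀ hfac0, mul_one]
    _ = q := Rat.num_div_den q

noncomputable def e1 : ((ℕ × ℕ) →₀ ℤ) →ₗ[ℤ] (ℕ →₀ ℚ) :=
  Finsupp.linearCombination ℤ (fun p : ℕ × ℕ => Finsupp.single p.1 ((p.2.factorial : ℚ))⁻¹)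

lemma e1_surj : Function.Surjective e1 := by
  intro bq
  induction bq using Finsupp.induction with
  | zero => exact ⟨0, map_zero _⟩
  | single_add i q f hif hq ih =>
    obtain ⟨a, ha⟩ := ih
    obtain ⟨n, k, hk⟩ := rat_aux q
    refine ⟨Finsupp.single (i, n) k + a, ?_⟩
    rw [map_add, ha]
    congr 1
    rw [e1, Finsupp.linearCombination_single, Finsupp.smul_single, hk]

noncomputable def qmap : (ℕ →₀ ℤ) →ₗ[ℤ] (ℕ →₀ ℚ) :=
  e1 ∘ₗ (Finsupp.domLCongr (Denumerable.eqv (ℕ × ℕ)).symm).toLinearMap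

lemma qmap_surj : Function.Surjective qmap :=
  e1_surj.comp (Finsupp.domLCongr (Denumerable.eqv (ℕ × ℕ)).symm).surjective

noncomputable def jmap : (ℕ →₀ ℤ) →ₗ[ℤ] (ℕ →₀ ℚ) :=
  Finsupp.mapRange.linearMap (Algebra.linearMap ℤ ℚ)

lemma jmap_inj : Function.Injective jmap :=
  Finsupp.mapRange_injective _ (map_zero _)
    (fun a b hab => Int.cast_injective (α := ℚ) (by simpa using hab))

noncomputable instance : DivisibleBy (ℕ →₀ ℚ) ℤ where
  div b n := b.mapRange (fun q => q / (n : ℚ)) (by simp)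
  div_zero b := by ext i; simp
  div_cancel {n} b hn := by
    ext i
    have hn' : (n : ℚ) ≠ 0 := Int.cast_ne_zero.mpr hn
    simp [Finsupp.smul_apply, Finsupp.mapRange_apply, zsmul_eq_mul, mul_div_cancel₀ _ hn']

end Stmt8Aux

open TensorProduct

theorem stmt8' {G : Type*} [AddCommGroup G]
    (h : ∀ N : AddSubgroup G, (∃ f : G →+ G ⧸ N, Function.Injective f) →
      ∃ H : AddSubgroup G, IsCompl N H) :
    Module.rank ℚ (ℚ ⊗[ℤ] G) < Cardinal.aleph0 := by
  by_contra hfin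
  have hrk : Cardinal.aleph0 ≤ Module.rank ℚ (ℚ ⊗[ℤ] G) := not_lt.mp hfin
  classical
  -- Step 1: a countable ℤ-linearly-independent family of simple tensors
  set s : Set (ℚ ⊗[ℤ] G) := Set.range (fun g : G => (1:ℚ) ⊗ₜ[ℤ] g) with hs_def
  have hs : Submodule.span ℚ s = ⊤ := by
    rw [Submodule.eq_top_iff']
    intro x
    induction x using TensorProduct.induction_on with
    | zero => exact Submodule.zero_mem _
    | tmul r g =>
      have hr : r ⊗ₜ[ℤ] g = r • ((1:ℚ) ⊗ₜ[ℤ] g) := by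
        rw [TensorProduct.smul_tmul', smul_eq_mul, mul_one]
      rw [hr]
      exact Submodule.smul_mem _ _ (Submodule.subset_span ⟨g, rfl⟩)
    | add x y hx hy => exact Submodule.add_mem _ hx hy
  obtain ⟨b, hbs, hbspan, hbind⟩ := exists_linearIndependent ℚ s
  have hbtop : Submodule.span ℚ b = ⊤ := by rw [hbspan, hs]
  have hbcard : Cardinal.aleph0 ≤ Cardinal.mk b := by
    have h1 := rank_span_set hbind
    rw [hbtop, rank_top] at h1
    exact h1 ▸ hrk
  have hbinf : b.Infinite := Set.infinite_coe_iff.mp (Cardinal.infinite_iff.mpr hbcard)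
  let emb := hbinf.natEmbedding
  have hmem : ∀ n : ℕ, ((emb n : b) : ℚ ⊗[ℤ] G) ∈ s := fun n => hbs (emb n).2
  choose v hv using hmem
  have hQ : LinearIndependent ℚ (fun n : ℕ => (1:ℚ) ⊗ₜ[ℤ] v n) := by
    have h4 := hbind.comp emb emb.injective
    have h5 : (fun n : ℕ => (1:ℚ) ⊗ₜ[ℤ] v n) = fun n => ((emb n : b) : ℚ ⊗[ℤ] G) :=
      funext fun n => hv n
    rw [h5]
    exact h4
  have hZ : LinearIndependent ℤ (fun n : ℕ => (1:ℚ) ⊗ₜ[ℤ] v n) :=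
    hQ.restrict_scalars (by
      intro a b' hab
      have : ((a : ℚ)) = (b' : ℚ) := by simpa using hab
      exact_mod_cast this)
  -- Step 2: the maps
  let φ : (ℕ →₀ ℤ) →ₗ[ℤ] G := Finsupp.linearCombination ℤ v
  let ψ : G →ₗ[ℤ] ℚ ⊗[ℤ] G := TensorProduct.mk ℤ ℚ G 1
  have hψφ : ∀ c : ℕ →₀ ℤ,
      ψ (φ c) = Finsupp.linearCombination ℤ (fun n => (1:ℚ) ⊗ₜ[ℤ] v n) c := fun c =>
    Finsupp.apply_linearCombination ℤ ψ v c
  have hφ : Function.Injective φ := by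
    intro c d hcd
    have h5 : φ (c - d) = 0 := by rw [map_sub, hcd, sub_self]
    have h6 : ψ (φ (c - d)) = 0 := by rw [h5, map_zero]
    rw [hψφ] at h6
    have h7 := linearIndependent_iff.mp hZ _ h6
    exact sub_eq_zero.mp h7
  let N' : Submodule ℤ G := (LinearMap.ker Stmt8Aux.qmap).map φ
  let N : AddSubgroup G := N'.toAddSubgroup
  have hNmem : ∀ g : G, g ∈ N ↔ ∃ a ∈ LinearMap.ker Stmt8Aux.qmap, φ a = g := by
    intro g
    rw [Submodule.mem_toAddSubgroup]
    exact Submodule.mem_map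
  let π : G →+ G ⧸ N := QuotientAddGroup.mk' N
  have hπ0 : ∀ g : G, π g = 0 ↔ g ∈ N := fun g => QuotientAddGroup.eq_zero_iff g
  let πl : G →ₗ[ℤ] G ⧸ N := π.toIntLinearMap
  have hsub : LinearMap.ker Stmt8Aux.qmap ≤ LinearMap.ker (πl ∘ₗ φ) := by
    intro a ha
    have : π (φ a) = 0 := (hπ0 (φ a)).mpr ((hNmem _).mpr ⟨a, ha, rfl⟩)
    exact this
  let ρ0 : ((ℕ →₀ ℤ) ⧸ LinearMap.ker Stmt8Aux.qmap) →ₗ[ℤ] G ⧸ N :=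
    Submodule.liftQ _ (πl ∘ₗ φ) hsub
  let eq1 := LinearMap.quotKerEquivOfSurjective Stmt8Aux.qmap Stmt8Aux.qmap_surj
  let ρ : (ℕ →₀ ℚ) →ₗ[ℤ] G ⧸ N := ρ0 ∘ₗ (eq1.symm : (ℕ →₀ ℚ) →ₗ[ℤ] _)
  have heq1 : ∀ a : ℕ →₀ ℤ, eq1 (Submodule.Quotient.mk a) = Stmt8Aux.qmap a := by
    intro a
    simp [eq1, LinearMap.quotKerEquivOfSurjective, LinearMap.quotKerEquivRange_apply_mk]
  have hρq : ∀ a : ℕ →₀ ℤ, ρ (Stmt8Aux.qmap a) = π (φ a) := by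
    intro a
    have h7 : eq1.symm (Stmt8Aux.qmap a) = Submodule.Quotient.mk a := by
      rw [← heq1 a, LinearEquiv.symm_apply_apply]
    show ρ0 (eq1.symm (Stmt8Aux.qmap a)) = π (φ a)
    rw [h7]
    exact Submodule.liftQ_apply _ _ _
  have hρinj : Function.Injective ρ := by
    have key : ∀ x : ℕ →₀ ℚ, ρ x = 0 → x = 0 := by
      intro x hx
      obtain ⟨a, rfl⟩ := Stmt8Aux.qmap_surj x
      rw [hρq] at hx
      obtain ⟨a', ha', haa'⟩ := (hNmem _).mp ((hπ0 _).mp hx)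
      have : a' = a := hφ haa'
      rw [← this]
      exact ha'
    intro x y hxy
    have := key (x - y) (by rw [map_sub, hxy, sub_self])
    exact sub_eq_zero.mp this
  have hrange : ∀ g : G, (∃ x : ℕ →₀ ℚ, ρ x = π g) → ∃ a : ℕ →₀ ℤ, φ a = g := by
    rintro g ⟨x, hx⟩
    obtain ⟨a, rfl⟩ := Stmt8Aux.qmap_surj x
    rw [hρq] at hx
    have h8 : π (g - φ a) = 0 := by rw [map_sub, hx, sub_self]
    obtain ⟨a', ha', haa'⟩ := (hNmem _).mp ((hπ0 _).mp h8)
    refine ⟨a + a', ?_⟩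
    rw [map_add, haa']
    abel
  -- Step 3: the injective map G → G ⧸ N
  let F : Submodule ℤ G := LinearMap.range φ
  let φe : (ℕ →₀ ℤ) ≃ₗ[ℤ] F := LinearEquiv.ofInjective φ hφ
  let δ0 : F →ₗ[ℤ] (ℕ →₀ ℚ) := (Stmt8Aux.jmap - Stmt8Aux.qmap) ∘ₗ (φe.symm : F →ₗ[ℤ] (ℕ →₀ ℤ))
  obtain ⟨δ, hδ⟩ := (Module.Baer.of_divisible (ℕ →₀ ℚ)).extension_property F.subtype
    (Submodule.injective_subtype F) δ0
  have hδφ : ∀ a : ℕ →₀ ℤ, δ (φ a) = Stmt8Aux.jmap a - Stmt8Aux.qmap a := by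
    intro a
    have h9 : F.subtype (φe a) = φ a := rfl
    calc δ (φ a) = (δ ∘ₗ F.subtype) (φe a) := by rw [LinearMap.comp_apply, h9]
      _ = δ0 (φe a) := by rw [hδ]
      _ = (Stmt8Aux.jmap - Stmt8Aux.qmap) (φe.symm (φe a)) := rfl
      _ = Stmt8Aux.jmap a - Stmt8Aux.qmap a := by
          rw [LinearEquiv.symm_apply_apply, LinearMap.sub_apply]
  let f : G →+ G ⧸ N := π + ρ.toAddMonoidHom.comp δ.toAddMonoidHom
  have hfapp : ∀ g : G, f g = π g + ρ (δ g) := fun g => rfl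
  have hfinj : Function.Injective f := by
    rw [injective_iff_map_eq_zero]
    intro g hg
    rw [hfapp] at hg
    have h10 : ρ (-δ g) = π g := by
      rw [map_neg]
      rw [add_eq_zero_iff_eq_neg] at hg
      rw [← hg]
    obtain ⟨a, rfl⟩ := hrange g ⟨-δ g, h10⟩
    rw [hδφ, map_sub, ← hρq] at hg
    have h11 : ρ (Stmt8Aux.jmap a) =
        ρ (Stmt8Aux.qmap a) + (ρ (Stmt8Aux.jmap a) - ρ (Stmt8Aux.qmap a)) := by abel
    have h12 : ρ (Stmt8Aux.jmap a) = 0 := h11.trans hg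
    have h13 : Stmt8Aux.jmap a = 0 := hρinj (by rw [h12, map_zero])
    have h14 : a = 0 := Stmt8Aux.jmap_inj (by rw [h13, map_zero])
    rw [h14, map_zero]
  obtain ⟨H, hH⟩ := h N ⟨f, hfinj⟩
  -- Step 4: contradiction
  let πH : H →+ G ⧸ N := π.comp H.subtype
  have hπHinj : Function.Injective πH := by
    rw [injective_iff_map_eq_zero]
    intro x hx
    have h14 : (x : G) ∈ N := (hπ0 _).mp hx
    have h15 : (x : G) ∈ (N ⊓ H : AddSubgroup G) := ⟨h14, x.2⟩
    rw [hH.inf_eq_bot] at h15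
    exact Subtype.ext h15
  have hπHsurj : Function.Surjective πH := by
    intro z
    obtain ⟨g, rfl⟩ := QuotientAddGroup.mk'_surjective N z
    have h16 : g ∈ (N ⊔ H : AddSubgroup G) := by rw [hH.sup_eq_top]; trivial
    obtain ⟨n, hn, hh, hhh, hsum⟩ := AddSubgroup.mem_sup.mp h16
    refine ⟨⟨hh, hhh⟩, ?_⟩
    show π hh = π g
    rw [← hsum, map_add, (hπ0 n).mpr hn, zero_add]
  let πHe := AddEquiv.ofBijective πH ⟨hπHinj, hπHsurj⟩
  let ι : (ℕ →₀ ℚ) →+ G := H.subtype.comp (πHe.symm.toAddMonoidHom.comp ρ.toAddMonoidHom)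
  have hι : ∀ x : ℕ →₀ ℚ, π (ι x) = ρ x := by
    intro x
    show π (H.subtype (πHe.symm (ρ x))) = ρ x
    exact πHe.apply_symm_apply (ρ x)
  have hιinj : Function.Injective ι := by
    intro x y hxy
    apply hρinj
    rw [← hι, ← hι, hxy]
  have hιF : ∀ x : ℕ →₀ ℚ, ∃ a : ℕ →₀ ℤ, φ a = ι x := fun x => hrange _ ⟨x, (hι x).symm⟩
  choose aa haa using hιF
  set a0 := aa (Finsupp.single 0 (1:ℚ)) with ha0
  have ha0ne : a0 ≠ 0 := by
    intro h0
    have h17 : ι (Finsupp.single 0 (1:ℚ)) = 0 := by rw [← haa, ← ha0, h0, map_zero]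
    have h18 : Finsupp.single 0 (1:ℚ) = 0 := hιinj (by rw [h17, map_zero])
    exact one_ne_zero (Finsupp.single_eq_zero.mp h18)
  obtain ⟨i, hi⟩ : ∃ i, a0 i ≠ 0 := by
    by_contra h0
    push_neg at h0
    exact ha0ne (Finsupp.ext h0)
  have hdvd : ∀ n : ℕ, 0 < n → ((n : ℤ)) ∣ a0 i := by
    intro n hn
    have hn' : ((n : ℚ)) ≠ 0 := Nat.cast_ne_zero.mpr hn.ne'
    have e2 : Finsupp.single 0 (1:ℚ) = (n : ℤ) • Finsupp.single 0 ((n : ℚ))⁻¹ := by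
      rw [Finsupp.smul_single]
      congr 1
      rw [zsmul_eq_mul, Int.cast_natCast, mul_inv_cancel₀ hn']
    have e3 : φ a0 = (n : ℤ) • φ (aa (Finsupp.single 0 ((n : ℚ))⁻¹)) := by
      rw [ha0, haa, haa, ← map_zsmul ι, ← e2]
    rw [← map_smul] at e3
    have e4 := hφ e3
    refine ⟨(aa (Finsupp.single 0 ((n : ℚ))⁻¹)) i, ?_⟩
    calc a0 i = ((n : ℤ) • aa (Finsupp.single 0 ((n : ℚ))⁻¹)) i := by rw [← e4]
      _ = (n : ℤ) * (aa (Finsupp.single 0 ((n : ℚ))⁻¹)) i := by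
          rw [Finsupp.smul_apply, smul_eq_mul]
  have hlt := hdvd ((a0 i).natAbs + 1) (Nat.succ_pos _)
  have hzero : a0 i = 0 := by
    refine Int.eq_zero_of_dvd_of_natAbs_lt_natAbs hlt ?_
    rw [Int.natAbs_natCast]
    omega
  exact hi hzero


/-- every generalized Bassian group has finite torsion-free rank. -/
theorem stmt8 {G : Type*} [AddCommGroup G] (h : GeneralizedBassian G) :
    FiniteRank G :=
  stmt8' h
end

section
/- Suppose G = A ⊕ B is an abelian group decomposition and M is a subgroup of G such that the projection π: G → B is injective on M and π(M) is a direct summand of B. Then M is a direct summand of G. -/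
open TensorProduct

/-- if G = A ⊕ B, π is the projection onto B with kernel A, π is
injective on M and π(M) is a summand of B, then M is a summand of G. -/
theorem stmt10 {G : Type*} [AddCommGroup G] (A B : AddSubgroup G) (hAB : IsCompl A B)
    (π : G →+ G) (hπA : ∀ a ∈ A, π a = 0) (hπB : ∀ b ∈ B, π b = b)
    (M : AddSubgroup G)
    (hinj : ∀ m ∈ M, π m = 0 → m = 0)
    (hsum : M.map π ≤ B ∧ ∃ K : AddSubgroup G, K ≤ B ∧
      (M.map π) ⊓ K = ⊥ ∧ (M.map π) ⊔ K = B) :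
    ∃ H : AddSubgroup G, IsCompl M H := by
  obtain ⟨hMB, K, hKB, hMK_inf, hMK_sup⟩ := hsum
  have hker : ∀ x : G, π x = 0 → x ∈ A := by
    intro x hx
    obtain ⟨a, ha, b, hb, hab⟩ := AddSubgroup.mem_sup.mp
      (show x ∈ A ⊔ B by rw [hAB.sup_eq_top]; trivial)
    have hb0 : π x = b := by rw [← hab, map_add, hπA a ha, hπB b hb, zero_add]
    rw [hx] at hb0
    rw [← hab, ← hb0, add_zero]; exact ha
  refine ⟨A ⊔ K, ?_, ?_⟩
  · rw [AddSubgroup.disjoint_def]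
    intro m hm hmAK
    obtain ⟨a, ha, k, hk, hak⟩ := AddSubgroup.mem_sup.mp hmAK
    have hπm : π m = k := by rw [← hak, map_add, hπA a ha, hπB k (hKB hk), zero_add]
    have hmem : π m ∈ M.map π ⊓ K := ⟨⟨m, hm, rfl⟩, hπm ▸ hk⟩
    rw [hMK_inf] at hmem
    exact hinj m hm hmem
  · rw [codisjoint_iff, eq_top_iff]
    intro g _
    obtain ⟨a, ha, b, hb, hab⟩ := AddSubgroup.mem_sup.mp
      (show g ∈ A ⊔ B by rw [hAB.sup_eq_top]; trivial)
    obtain ⟨x, hx, k, hk, hxk⟩ := AddSubgroup.mem_sup.mp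
      (show b ∈ M.map π ⊔ K by rw [hMK_sup]; exact hb)
    obtain ⟨m, hm, rfl⟩ := hx
    have h1 : π m - m ∈ A := hker _ (by
      rw [map_sub, hπB (π m) (hMB ⟨m, hm, rfl⟩), sub_self])
    have hg : g = m + ((a + (π m - m)) + k) := by rw [← hab, ← hxk]; abel
    rw [hg]
    exact AddSubgroup.add_mem_sup hm
      ((A ⊔ K).add_mem (AddSubgroup.mem_sup_left (A.add_mem ha h1))
        (AddSubgroup.mem_sup_right hk))
end

section
/- Let S be a torsion abelian group with no nonzero elementary direct summands, and let G = A ⊕ S. If E is an elementary subgroup of G that is a direct summand of G, then the projection of every element of E onto S lands in the complement, and consequently E is isomorphic to a direct summand of A. In particular, S[p] ⊆ pS holds for each prime p. -/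
open TensorProduct

section Aux

variable {S : Type*} [AddCommGroup S]

lemma nsmul_mod_smul {p : ℕ} {s : S} (hs : p • s = 0) (n : ℕ) : (n % p) • s = n • s := by
  conv_rhs => rw [← Nat.mod_add_div' n p]
  rw [add_nsmul, mul_smul, hs, smul_zero, add_zero]

lemma elementary_zmultiples {p : ℕ} (hp : p.Prime) {s : S} (hs : p • s = 0) :
    Elementary ↥(AddSubgroup.zmultiples s) := by
  have hkill : ∀ x : ↥(AddSubgroup.zmultiples s), p • x = 0 := by
    rintro ⟨x, hx⟩
    obtain ⟨k, rfl⟩ := AddSubgroup.mem_zmultiples_iff.mp hx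
    ext
    show p • (k • s) = 0
    rw [smul_comm, hs, smul_zero]
  constructor
  · intro x
    exact isOfFinAddOrder_iff_nsmul_eq_zero.mpr ⟨p, hp.pos, hkill x⟩
  · intro q hq x hx
    rcases eq_or_ne q p with rfl | hqp
    · exact hkill x
    · obtain ⟨n, hn⟩ := hx
      have h1 : addOrderOf x ∣ q ^ n := addOrderOf_dvd_of_nsmul_eq_zero hn
      have h2 : addOrderOf x ∣ p := addOrderOf_dvd_of_nsmul_eq_zero (hkill x)
      have hco : (Nat.Coprime (q ^ n) p) :=
        Nat.Coprime.pow_left n ((Nat.coprime_primes hq hp).mpr hqp)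
      have : addOrderOf x = 1 := Nat.eq_one_of_dvd_coprimes hco h1 h2
      rw [AddMonoid.addOrderOf_eq_one_iff.mp this, smul_zero]

lemma exists_functional {p : ℕ} (hp : p.Prime) {V : Type*} [AddCommGroup V]
    [Module (ZMod p) V] (v : V) (hv : v ≠ 0) : ∃ g : V →+ ZMod p, g v = 1 := by
  haveI : Fact p.Prime := ⟨hp⟩
  obtain ⟨f, hf⟩ : ∃ f : Module.Dual (ZMod p) V, f v ≠ 0 := by
    by_contra hall
    push_neg at hall
    exact hv ((Module.forall_dual_apply_eq_zero_iff (ZMod p) v).mp hall)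
  refine ⟨((f v)⁻¹ • f).toAddMonoidHom, ?_⟩
  simp [inv_mul_cancel₀ hf]

lemma L3 (hS' : ∀ E : AddSubgroup S, (∃ H, IsCompl E H) → Elementary ↥E → E = ⊥)
    {p : ℕ} (hp : p.Prime) (s : S) (hs : p • s = 0) : ∃ t : S, p • t = s := by
  by_contra hcon
  push_neg at hcon
  haveI : Fact p.Prime := ⟨hp⟩
  haveI : NeZero p := ⟨hp.ne_zero⟩
  set N : AddSubgroup S :=
    (AddMonoidHom.mk' (fun x : S => p • x) (fun a b => smul_add p a b)).range with hN
  have hNmem : ∀ x : S, p • x ∈ N := fun x => ⟨x, rfl⟩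
  set v : S ⧸ N := QuotientAddGroup.mk s with hv
  have hv0 : v ≠ 0 := by
    intro h
    obtain ⟨t, ht⟩ := (QuotientAddGroup.eq_zero_iff s).mp h
    exact hcon t ht
  obtain ⟨g, hgv⟩ := @exists_functional p hp (S ⧸ N) _ (QuotientAddGroup.zmodModule hNmem) v hv0
  have hadd : ∀ x y : S, (g (QuotientAddGroup.mk (x + y))).val • s
      = (g (QuotientAddGroup.mk x)).val • s + (g (QuotientAddGroup.mk y)).val • s := by
    intro x y
    have h0 : (QuotientAddGroup.mk (x + y) : S ⧸ N)
        = QuotientAddGroup.mk x + QuotientAddGroup.mk y := rfl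
    rw [h0, map_add, ZMod.val_add, nsmul_mod_smul hs, add_nsmul]
  set φ : S →+ S := AddMonoidHom.mk' (fun x => (g (QuotientAddGroup.mk x)).val • s) hadd with hφ
  have hφval : ∀ x : S, φ x = (g (QuotientAddGroup.mk x)).val • s := fun _ => rfl
  have hφs : φ s = s := by
    rw [hφval, ← hv, hgv, ZMod.val_one, one_nsmul]
  have hφmem : ∀ x, φ x ∈ AddSubgroup.zmultiples s := by
    intro x
    rw [hφval]
    exact AddSubgroup.mem_zmultiples_iff.mpr
      ⟨((g (QuotientAddGroup.mk x)).val : ℤ), natCast_zsmul s _⟩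
  have hφid : ∀ x, φ (φ x) = φ x := by
    intro x
    rw [hφval x, hφval]
    have h1 : (QuotientAddGroup.mk ((g (QuotientAddGroup.mk x)).val • s) : S ⧸ N)
        = (g (QuotientAddGroup.mk x)).val • v := by
      rw [hv, ← QuotientAddGroup.mk_nsmul]
    rw [h1, map_nsmul, hgv, nsmul_eq_mul, mul_one, ZMod.natCast_rightInverse]
  have hφEs : ∀ x ∈ AddSubgroup.zmultiples s, φ x = x := by
    intro x hx
    obtain ⟨k, rfl⟩ := AddSubgroup.mem_zmultiples_iff.mp hx
    rw [map_zsmul, hφs]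
  have compl : IsCompl (AddSubgroup.zmultiples s) φ.ker := by
    constructor
    · rw [AddSubgroup.disjoint_def]
      intro x hx hker
      rw [← hφEs x hx]
      exact hker
    · rw [codisjoint_iff, eq_top_iff]
      intro x _
      refine AddSubgroup.mem_sup.mpr ⟨φ x, hφmem x, x - φ x, ?_, by abel⟩
      show φ (x - φ x) = 0
      rw [map_sub, hφid, sub_self]
  have hbot := hS' _ ⟨φ.ker, compl⟩ (elementary_zmultiples hp hs)
  have : s ∈ (⊥ : AddSubgroup S) := hbot ▸ AddSubgroup.mem_zmultiples s
  exact hcon 0 (by rw [AddSubgroup.mem_bot.mp this, smul_zero])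

end Aux
/-- if S is torsion with no nonzero elementary summands and
E ⊕ H = A ⊕ S with E elementary, then the S-component of every element of E lies in H,
E is isomorphic to a summand of A, and S[p] ⊆ pS for each prime p. -/
theorem stmt12 {A S : Type*} [AddCommGroup A] [AddCommGroup S]
    (hS : AddMonoid.IsTorsion S)
    (hS' : ∀ E : AddSubgroup S, (∃ H, IsCompl E H) → Elementary ↥E → E = ⊥)
    (E H : AddSubgroup (A × S)) (hEH : IsCompl E H) (hE : Elementary ↥E) :
    (∀ x ∈ E, ((0 : A), (x.2 : S)) ∈ H) ∧
    (∃ E' : AddSubgroup A, (∃ H', IsCompl E' H') ∧ Nonempty (↥E ≃+ ↥E')) ∧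
    (∀ p : ℕ, p.Prime → ∀ s : S, p • s = 0 → ∃ t : S, p • t = s) := by
  have part3 : ∀ p : ℕ, p.Prime → ∀ s : S, p • s = 0 → ∃ t, p • t = s :=
    fun p hp s hs => L3 hS' hp s hs
  -- the prime case of the main claim
  have primecase : ∀ p : ℕ, p.Prime → ∀ x : A × S, x ∈ E → p • x = 0 →
      ((0 : A), x.2) ∈ H := by
    intro p hp x hx hpx
    have hs2 : p • x.2 = 0 := by
      have : (p • x).2 = p • x.2 := rfl
      rw [← this, hpx]
      rfl
    obtain ⟨t, ht⟩ := part3 p hp x.2 hs2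
    have htop : ((0 : A), t) ∈ E ⊔ H := by
      rw [hEH.codisjoint.eq_top]; trivial
    obtain ⟨e, he, h, hh, hsum⟩ := AddSubgroup.mem_sup.mp htop
    have h1 : p • ((0 : A), t) = ((0 : A), x.2) := by
      have : p • ((0 : A), t) = (p • (0 : A), p • t) := rfl
      rw [this, smul_zero, ht]
    have h0 : p • ((0 : A), x.2) = 0 := by
      have : p • ((0 : A), x.2) = (p • (0 : A), p • x.2) := rfl
      rw [this, smul_zero, hs2]; rfl
    have h2 : (p * p) • e + (p * p) • h = 0 := by
      rw [← smul_add, hsum, mul_smul, h1, h0]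
    have he2 : (p * p) • e = 0 := by
      have hmem : (p * p) • e ∈ H := by
        have : (p * p) • e = -((p * p) • h) := by
          rw [eq_neg_iff_add_eq_zero]; exact h2
        rw [this]
        exact H.neg_mem (H.nsmul_mem hh _)
      exact (AddSubgroup.disjoint_def.mp hEH.disjoint) (E.nsmul_mem he _) hmem
    have hmemT : (⟨e, he⟩ : ↥E) ∈ pTorsion ↥E p := by
      refine ⟨2, Subtype.ext ?_⟩
      show p ^ 2 • e = 0
      rw [pow_two]
      exact he2
    have hpe : p • e = 0 := by
      have := hE.2 p hp _ hmemT
      have h3 : p • e = ((p • (⟨e, he⟩ : ↥E) : ↥E) : A × S) := rfl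
      rw [h3, this]; rfl
    have : ((0 : A), x.2) = p • h := by
      rw [← h1, ← hsum, smul_add, hpe, zero_add]
    rw [this]
    exact H.nsmul_mem hh _
  -- the general claim by strong induction on the order
  have key : ∀ n : ℕ, 0 < n → ∀ x : A × S, x ∈ E → n • x = 0 → ((0 : A), x.2) ∈ H := by
    intro n
    induction n using Nat.strong_induction_on with
    | _ n ih =>
      intro hn x hx hnx
      rcases eq_or_ne n 1 with rfl | h1
      · rw [one_nsmul] at hnx
        subst hnx
        exact H.zero_mem
      · obtain ⟨p, hp, hdvd⟩ := Nat.exists_prime_and_dvd h1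
        obtain ⟨m, rfl⟩ := hdvd
        have hm : 0 < m := Nat.pos_of_ne_zero (by rintro rfl; simp at hn)
        by_cases hpm : p ∣ m
        · obtain ⟨k, rfl⟩ := hpm
          have hz : k • x ∈ E := E.nsmul_mem hx k
          have hz2 : (⟨k • x, hz⟩ : ↥E) ∈ pTorsion ↥E p := by
            refine ⟨2, Subtype.ext ?_⟩
            show p ^ 2 • k • x = 0
            rw [pow_two, ← mul_smul, show p * p * k = p * (p * k) by ring]
            exact hnx
          have hpz : (p * k) • x = 0 := by
            have := hE.2 p hp _ hz2
            have h3 : (p * k) • x = ((p • (⟨k • x, hz⟩ : ↥E) : ↥E) : A × S) := by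
              show (p * k) • x = p • k • x
              rw [mul_smul]
            rw [h3, this]; rfl
          exact ih (p * k) ((lt_mul_iff_one_lt_left hm).mpr hp.one_lt) hm x hx hpz
        · have hco : IsCoprime (p : ℤ) (m : ℤ) := by
            rw [Int.isCoprime_iff_gcd_eq_one, Int.gcd_natCast_natCast]
            exact hp.coprime_iff_not_dvd.mpr hpm
          obtain ⟨a, b, hab⟩ := hco
          set x₁ := (b * (m : ℤ)) • x with hx₁
          set x₂ := (a * (p : ℤ)) • x with hx₂
          have hx12 : x = x₁ + x₂ := by
            rw [hx₁, hx₂, ← add_zsmul]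
            have : b * (m : ℤ) + a * (p : ℤ) = 1 := by linarith [hab]
            rw [this, one_zsmul]
          have hx₁E : x₁ ∈ E := E.zsmul_mem hx _
          have hx₂E : x₂ ∈ E := E.zsmul_mem hx _
          have hnxz : ((p : ℤ) * (m : ℤ)) • x = 0 := by
            have : ((p : ℤ) * (m : ℤ)) = ((p * m : ℕ) : ℤ) := by push_cast; ring
            rw [this, natCast_zsmul, hnx]
          have hpx₁ : p • x₁ = 0 := by
            have : (p : ℤ) • x₁ = 0 := by
              rw [hx₁, ← mul_smul, show (p : ℤ) * (b * (m : ℤ)) = b * ((p : ℤ) * (m : ℤ)) by ring,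
                mul_smul, hnxz, smul_zero]
            rw [← natCast_zsmul]
            exact this
          have hmx₂ : m • x₂ = 0 := by
            have : (m : ℤ) • x₂ = 0 := by
              rw [hx₂, ← mul_smul, show (m : ℤ) * (a * (p : ℤ)) = a * ((p : ℤ) * (m : ℤ)) by ring,
                mul_smul, hnxz, smul_zero]
            rw [← natCast_zsmul]
            exact this
          have mem1 : ((0 : A), x₁.2) ∈ H := primecase p hp x₁ hx₁E hpx₁
          have mem2 : ((0 : A), x₂.2) ∈ H :=
            ih m ((lt_mul_iff_one_lt_left hm).mpr hp.one_lt) hm x₂ hx₂E hmx₂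
          have heq : ((0 : A), x.2) = ((0 : A), x₁.2) + ((0 : A), x₂.2) :=
            Prod.ext_iff.mpr ⟨by simp, by rw [hx12]; rfl⟩
          rw [heq]
          exact H.add_mem mem1 mem2
  have part1 : ∀ x ∈ E, ((0 : A), x.2) ∈ H := by
    intro x hx
    obtain ⟨n, hn, hnx⟩ := isOfFinAddOrder_iff_nsmul_eq_zero.mp (hE.1 (⟨x, hx⟩ : ↥E))
    have hnx' : n • x = 0 := by
      have : ((n • (⟨x, hx⟩ : ↥E) : ↥E) : A × S) = n • x := rfl
      rw [← this, hnx]; rfl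
    exact key n hn x hx hnx'
  refine ⟨part1, ?_, part3⟩
  -- part 2
  set E' := AddSubgroup.map (AddMonoidHom.fst A S) E with hE'
  set H' := AddSubgroup.comap (AddMonoidHom.inl A S) H with hH'
  have hcompl : IsCompl E' H' := by
    constructor
    · rw [AddSubgroup.disjoint_def]
      intro a haE haH
      obtain ⟨e, he, hea⟩ := AddSubgroup.mem_map.mp haE
      have h1 : ((0 : A), e.2) ∈ H := part1 e he
      have h2 : (a, (0 : S)) ∈ H := haH
      have h3 : e ∈ H := by
        have : e = (a, (0 : S)) + ((0 : A), e.2) := by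
          rw [Prod.mk_add_mk, add_zero, zero_add, ← hea]
          rfl
        rw [this]
        exact H.add_mem h2 h1
      have : e = 0 := AddSubgroup.disjoint_def.mp hEH.disjoint he h3
      rw [← hea, this]; simp
    · rw [codisjoint_iff, eq_top_iff]
      intro a _
      have htop : ((a : A), (0 : S)) ∈ E ⊔ H := by
        rw [hEH.codisjoint.eq_top]; trivial
      obtain ⟨e, he, h, hh, hsum⟩ := AddSubgroup.mem_sup.mp htop
      refine AddSubgroup.mem_sup.mpr ⟨e.1, AddSubgroup.mem_map.mpr ⟨e, he, rfl⟩, h.1, ?_, ?_⟩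
      · show (h.1, (0 : S)) ∈ H
        have h1 : ((0 : A), e.2) ∈ H := part1 e he
        have h2 : e.2 + h.2 = 0 := by
          have : (e + h).2 = ((a : A), (0 : S)).2 := by rw [hsum]
          exact this
        have h3 : (h.1, (0 : S)) = h + ((0 : A), e.2) := by
          have : h + ((0 : A), e.2) = (h.1 + 0, h.2 + e.2) := rfl
          rw [this, add_zero, add_comm h.2 e.2, h2]
        rw [h3]
        exact H.add_mem hh h1
      · have : (e + h).1 = ((a : A), (0 : S)).1 := by rw [hsum]
        exact this
  refine ⟨E', ⟨H', hcompl⟩, ?_⟩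
  have hmemE' : ∀ x : ↥E, ((x : A × S)).1 ∈ E' :=
    fun x => AddSubgroup.mem_map.mpr ⟨x, x.2, rfl⟩
  set g : ↥E →+ ↥E' :=
    AddMonoidHom.codRestrict ((AddMonoidHom.fst A S).comp E.subtype) E' hmemE' with hg
  have hinj : Function.Injective g := by
    rw [injective_iff_map_eq_zero]
    intro x hgx
    have h1 : ((x : A × S)).1 = 0 := by
      have := congrArg (Subtype.val) hgx
      exact this
    have h2 : ((0 : A), ((x : A × S)).2) ∈ H := part1 x x.2
    have h3 : (x : A × S) ∈ H := by
      have : (x : A × S) = ((0 : A), ((x : A × S)).2) := by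
        rw [← h1]
      rw [this]
      exact h2
    have : (x : A × S) = 0 := AddSubgroup.disjoint_def.mp hEH.disjoint x.2 h3
    exact Subtype.ext this
  have hsurj : Function.Surjective g := by
    rintro ⟨y, hy⟩
    obtain ⟨e, he, hey⟩ := AddSubgroup.mem_map.mp hy
    exact ⟨⟨e, he⟩, Subtype.ext hey⟩
  exact ⟨AddEquiv.ofBijective g ⟨hinj, hsurj⟩⟩
end

section
/- Let T be a torsion abelian group such that each p-primary component T_p is bounded. Then the quotient (∏_p T_p)/(⊕_p T_p) of the product of the p-primary components by their direct sum is torsion-free and divisible. -/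
open TensorProduct

/-- the subgroup of finitely supported elements of a product. -/
def finSupp (ι : Type*) (T : ι → Type*) [∀ i, AddCommGroup (T i)] :
    AddSubgroup (∀ i, T i) where
  carrier := {f | {i | f i ≠ 0}.Finite}
  zero_mem' := by simp
  add_mem' := by
    intro a b ha hb
    refine Set.Finite.subset (Set.Finite.union ha hb) ?_
    intro i hi
    by_contra hc
    simp only [Set.mem_union, Set.mem_setOf_eq, not_or, not_not, ne_eq] at hc
    exact hi (by show a i + b i = 0; rw [hc.1, hc.2, add_zero])
  neg_mem' := by
    intro a ha
    refine Set.Finite.subset ha ?_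
    intro i hi
    simp only [Set.mem_setOf_eq] at hi ⊢
    intro h0
    exact hi (by show -a i = 0; rw [h0, neg_zero])


/-- If coprime N and n both kill y, then y = 0. -/
lemma key_coprime {G : Type*} [AddCommGroup G] {y : G} {N n : ℕ}
    (h : Nat.Coprime N n) (hN : N • y = 0) (hn : n • y = 0) : y = 0 := by
  have hb := Nat.gcd_eq_gcd_ab N n
  rw [h.gcd_eq_one] at hb
  have : y = ((N : ℤ) * Nat.gcdA N n + (n : ℤ) * Nat.gcdB N n) • y := by
    rw [← hb]; simp
  rw [this, add_smul, mul_comm (N:ℤ), mul_comm (n:ℤ), mul_smul, mul_smul,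
    natCast_zsmul, natCast_zsmul, hN, hn, smul_zero, smul_zero, add_zero]

/-- If coprime N and n, N kills y, then y is divisible by n with explicit witness. -/
lemma key_div {G : Type*} [AddCommGroup G] {y : G} {N n : ℕ}
    (h : Nat.Coprime N n) (hN : N • y = 0) :
    n • (Nat.gcdB N n • y) = y := by
  have hb := Nat.gcd_eq_gcd_ab N n
  rw [h.gcd_eq_one] at hb
  have h1 : y = ((N : ℤ) * Nat.gcdA N n + (n : ℤ) * Nat.gcdB N n) • y := by
    rw [← hb]; simp
  conv_rhs => rw [h1]
  rw [add_smul, mul_comm (N:ℤ), mul_smul, natCast_zsmul, hN, smul_zero, zero_add,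
    mul_smul, natCast_zsmul]

lemma finite_primes_dvd {n : ℕ} (hn : 0 < n) :
    {p : {p : ℕ // p.Prime} | (p : ℕ) ∣ n}.Finite := by
  have : {p : {p : ℕ // p.Prime} | (p : ℕ) ∣ n} ⊆ Subtype.val ⁻¹' (Set.Iic n) :=
    fun p hp => Nat.le_of_dvd hn hp
  exact Set.Finite.subset ((Set.finite_Iic n).preimage (Subtype.val_injective.injOn)) this

/-- for a family of bounded p-primary groups indexed by the primes,
(∏ T_p)/(⊕ T_p) is torsion-free and divisible. -/
theorem stmt14 (T : {p : ℕ // p.Prime} → Type*) [∀ p, AddCommGroup (T p)]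
    (hprim : ∀ p, ∀ x : T p, ∃ n : ℕ, (p : ℕ) ^ n • x = 0)
    (hbdd : ∀ p, ∃ n : ℕ, ∀ x : T p, (p : ℕ) ^ n • x = 0) :
    (∀ x : (∀ p, T p) ⧸ finSupp _ T, x ≠ 0 → ¬ IsOfFinAddOrder x) ∧
    (∀ n : ℕ, 0 < n →
      Function.Surjective (fun x : (∀ p, T p) ⧸ finSupp _ T => n • x)) := by
  classical
  set k : ∀ p : {p : ℕ // p.Prime}, ℕ := fun p => (hbdd p).choose with hk
  have hkspec : ∀ p, ∀ x : T p, (p : ℕ) ^ (k p) • x = 0 := fun p => (hbdd p).choose_spec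
  constructor
  · intro x hx hfin
    obtain ⟨n, hn, hnx⟩ := isOfFinAddOrder_iff_nsmul_eq_zero.mp hfin
    obtain ⟨f, rfl⟩ := QuotientAddGroup.mk_surjective x
    apply hx
    rw [QuotientAddGroup.eq_zero_iff]
    have hnf : n • f ∈ finSupp _ T := by
      rw [← QuotientAddGroup.eq_zero_iff, QuotientAddGroup.mk_nsmul]
      exact hnx
    have hsub : {p | f p ≠ 0} ⊆ {p | (n • f) p ≠ 0} ∪ {p : {p : ℕ // p.Prime} | (p : ℕ) ∣ n} := by
      intro p hp
      by_contra hc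
      simp only [Set.mem_union, Set.mem_setOf_eq, not_or, not_not, ne_eq] at hc
      obtain ⟨h1, h2⟩ := hc
      have hcop : Nat.Coprime ((p : ℕ) ^ (k p)) n :=
        Nat.Coprime.pow_left _ ((Nat.Prime.coprime_iff_not_dvd p.2).mpr h2)
      exact hp (key_coprime hcop (hkspec p (f p)) h1)
    exact Set.Finite.subset (Set.Finite.union hnf (finite_primes_dvd hn)) hsub
  · intro n hn y
    obtain ⟨f, rfl⟩ := QuotientAddGroup.mk_surjective y
    set g : ∀ p, T p := fun p =>
      if (p : ℕ) ∣ n then 0 else Nat.gcdB ((p : ℕ) ^ (k p)) n • f p with hg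
    refine ⟨QuotientAddGroup.mk g, ?_⟩
    show n • (QuotientAddGroup.mk g : (∀ p, T p) ⧸ finSupp _ T) = QuotientAddGroup.mk f
    rw [← QuotientAddGroup.mk_nsmul, QuotientAddGroup.eq]
    have hsub : {p | (-(n • g) + f) p ≠ 0} ⊆ {p : {p : ℕ // p.Prime} | (p : ℕ) ∣ n} := by
      intro p hp
      by_contra hc
      apply hp
      have hcop : Nat.Coprime ((p : ℕ) ^ (k p)) n :=
        Nat.Coprime.pow_left _ ((Nat.Prime.coprime_iff_not_dvd p.2).mpr hc)
      have hc' : ¬ (p : ℕ) ∣ n := hc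
      have hthis : n • g p = f p := by
        show n • (if (p : ℕ) ∣ n then 0 else Nat.gcdB ((p : ℕ) ^ (k p)) n • f p) = f p
        rw [if_neg hc']
        exact key_div hcop (hkspec p (f p))
      show -(n • g) p + f p = 0
      simp only [Pi.neg_apply, Pi.smul_apply]
      rw [hthis, neg_add_cancel]
    exact Set.Finite.subset (finite_primes_dvd hn) hsub
end

section
/- Suppose A is a Bassian abelian group containing a free subgroup F with A/F torsion such that for every prime p, the natural map on 0-th Ulm invariants U^0_F(p) → U^0_A(p) (induced by inclusion with the height valuation) is an isomorphism (F is 0-tight). Then every elementary direct summand of A is finite. -/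
open TensorProduct

/-- the p-height of an element, valued in ℕ∞ (∞ for elements divisible by all
powers of p). -/
noncomputable def pHeight {G : Type*} [AddCommGroup G] (p : ℕ) (x : G) : ℕ∞ :=
  ⨆ n ∈ {n : ℕ | ∃ y : G, p ^ n • y = x}, (n : ℕ∞)

/-- F ⊆ A (with the height valuation inherited from A) is 0-tight: for each prime p,
the natural map U^0_F(p) → U^0_A(p) of 0-th Ulm invariants induced by inclusion is an
isomorphism, i.e. (injectivity being automatic) each class of the 0-th Ulm invariant
of A is represented modulo pA by an element of F lying in the 0-th Ulm invariant
of F. -/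
def ZeroTight {A : Type*} [AddCommGroup A] (F : AddSubgroup A) : Prop :=
  ∀ p : ℕ, p.Prime → ∀ x : A, 2 ≤ pHeight p (p • x) →
    ∃ f ∈ F, 2 ≤ pHeight p (p • f) ∧ ∃ y : A, p • y = x - f

private lemma coprime_smul_eq_zero {A : Type*} [AddCommGroup A] {p c : ℕ}
    (h : Nat.Coprime p c) {a : A} (hp : p • a = 0) (hc : c • a = 0) : a = 0 := by
  obtain ⟨u, v, huv⟩ := h.isCoprime
  have h1 : ((u * p + v * c : ℤ)) • a = a := by rw [huv, one_smul]
  rw [← h1, add_smul, mul_smul, mul_smul, natCast_zsmul, natCast_zsmul, hp, hc,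
    smul_zero, smul_zero, add_zero]

/-- if A is Bassian with a 0-tight free subgroup F such that A/F is
torsion, then every elementary direct summand of A is finite. -/
theorem stmt17 {A : Type*} [AddCommGroup A] (hA : Bassian A) (F : AddSubgroup A)
    (hfree : Module.Free ℤ ↥F) (htor : AddMonoid.IsTorsion (A ⧸ F))
    (htight : ZeroTight F) :
    ∀ E : AddSubgroup A, (∃ H, IsCompl E H) → Elementary ↥E → Finite ↥E := by
  classical
  obtain ⟨hrank, hfin⟩ := hA
  intro E hEc hel
  obtain ⟨H, hc⟩ := hEc
  obtain ⟨htorE, hkill⟩ := hel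
  -- elementary helper in the ambient group
  have He : ∀ p : ℕ, p.Prime → ∀ a : A, a ∈ E → (∃ n : ℕ, p ^ n • a = 0) → p • a = 0 := by
    rintro p hp a ha ⟨n, hn⟩
    have hmem : (⟨a, ha⟩ : ↥E) ∈ pTorsion (↥E) p := ⟨n, by
      apply Subtype.ext; push_cast; simpa using hn⟩
    have h := hkill p hp _ hmem
    have h2 := congrArg (Subtype.val) h
    push_cast at h2
    simpa using h2
  -- torsion helper in the ambient group
  have HtA : ∀ a : A, a ∈ E → ∃ m : ℕ, m ≠ 0 ∧ m • a = 0 := by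
    intro a ha
    obtain ⟨m, hm0, hm⟩ := isOfFinAddOrder_iff_nsmul_eq_zero.mp (htorE ⟨a, ha⟩)
    refine ⟨m, hm0.ne', ?_⟩
    have h2 := congrArg Subtype.val hm
    push_cast at h2
    simpa using h2
  -- projection onto E
  have hcm : IsCompl (AddSubgroup.toIntSubmodule E) (AddSubgroup.toIntSubmodule H) :=
    (AddSubgroup.toIntSubmodule : AddSubgroup A ≃o Submodule ℤ A).isCompl hc
  set pr := (AddSubgroup.toIntSubmodule E).linearProjOfIsCompl _ hcm with hprdef
  set π : A →ₗ[ℤ] A := (AddSubgroup.toIntSubmodule E).subtype ∘ₗ pr with hπdef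
  have hπmem : ∀ a : A, π a ∈ E := fun a => (pr a).2
  have hπleft : ∀ a : A, a ∈ E → π a = a := by
    intro a ha
    have h1 : pr a = ⟨a, ha⟩ := Submodule.linearProjOfIsCompl_apply_left hcm ⟨a, ha⟩
    show ((pr a : ↥(AddSubgroup.toIntSubmodule E)) : A) = a
    rw [h1]
  -- F is finitely generated
  haveI : Module.Flat ℤ ℚ := IsLocalization.flat ℚ (nonZeroDivisors ℤ)
  have hfg : Module.Finite ℤ ↥F := by
    let b := Module.Free.chooseBasis ℤ ↥F
    have hinj : Function.Injective (LinearMap.baseChange ℚ (F.subtype.toIntLinearMap)) := by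
      rw [LinearMap.baseChange_eq_ltensor]
      exact Module.Flat.lTensor_preserves_injective_linearMap _ Subtype.val_injective
    have hlt : Cardinal.mk (Module.Free.ChooseBasisIndex ℤ ↥F) < Cardinal.aleph0 := by
      rw [Module.Basis.mk_eq_rank'' (Algebra.TensorProduct.basis ℚ b)]
      exact lt_of_le_of_lt (LinearMap.rank_le_of_injective _ hinj) hrank
    haveI : Finite (Module.Free.ChooseBasisIndex ℤ ↥F) := Cardinal.mk_lt_aleph0_iff.mp hlt
    exact Module.Finite.of_basis b
  obtain ⟨s, hs⟩ := hfg.fg_top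
  -- the bound N killing π(F)
  set N : ℕ := ∏ g ∈ s, addOrderOf (π (g : A)) with hNdef
  have hN0 : N ≠ 0 := by
    rw [hNdef]
    apply Finset.prod_ne_zero_iff.mpr
    intro g hg
    obtain ⟨m, hm0, hm⟩ := HtA (π (g : A)) (hπmem _)
    have : IsOfFinAddOrder (π (g : A)) :=
      isOfFinAddOrder_iff_nsmul_eq_zero.mpr ⟨m, Nat.pos_of_ne_zero hm0, hm⟩
    exact this.addOrderOf_pos.ne'
  have hNF : ∀ f : A, f ∈ F → N • π f = 0 := by
    intro f hf
    set L : ↥F →ₗ[ℤ] A := (N : ℤ) • (π ∘ₗ F.subtype.toIntLinearMap) with hLdef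
    have hker : (⊤ : Submodule ℤ ↥F) ≤ LinearMap.ker L := by
      rw [← hs]
      apply Submodule.span_le.mpr
      intro g hg
      simp only [SetLike.mem_coe, LinearMap.mem_ker, hLdef, LinearMap.smul_apply,
        LinearMap.comp_apply]
      have hdvd : addOrderOf (π (g : A)) ∣ N :=
        Finset.dvd_prod_of_mem _ (Finset.mem_coe.mp hg)
      have hz : N • π (g : A) = 0 := addOrderOf_dvd_iff_nsmul_eq_zero.mp hdvd
      rw [natCast_zsmul]
      exact hz
    have hL : L ⟨f, hf⟩ = 0 := LinearMap.mem_ker.mp (hker Submodule.mem_top)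
    have h2 : (N : ℤ) • π f = 0 := hL
    rwa [natCast_zsmul] at h2
  -- key step: for primes p not dividing N, E has no p-torsion
  have K1 : ∀ p : ℕ, p.Prime → ¬ p ∣ N → ∀ a : A, a ∈ E → p • a = 0 → a = 0 := by
    intro p hp hpN a haE hpa
    by_contra ha0
    have h2 : 2 ≤ pHeight p (p • a) := by
      rw [hpa]
      have hmem : (2 : ℕ) ∈ {n : ℕ | ∃ y : A, p ^ n • y = (0 : A)} := ⟨0, smul_zero _⟩
      have hle := le_iSup₂
        (f := fun (n : ℕ) (_ : n ∈ {n : ℕ | ∃ y : A, p ^ n • y = (0 : A)}) => (n : ℕ∞)) 2 hmem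
      unfold pHeight
      exact le_trans (by norm_num) hle
    obtain ⟨f, hfF, -, y, hy⟩ := htight p hp a h2
    have haeq : a = p • y + f := sub_eq_iff_eq_add.mp hy.symm
    have hπa : a = p • π y + π f := by
      conv_lhs => rw [← hπleft a haE, haeq, map_add, map_nsmul]
    obtain ⟨u, v, huv⟩ := ((hp.coprime_iff_not_dvd).mpr hpN).isCoprime
    have hNa : (N : ℤ) • a = (p : ℤ) • ((N : ℤ) • π y) := by
      have h1 : N • a = p • (N • π y) := by
        rw [hπa, smul_add, hNF f hfF, add_zero, smul_comm]
      rw [natCast_zsmul, natCast_zsmul, natCast_zsmul]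
      exact h1
    have hae : a = p • (v • ((N : ℤ) • π y)) := by
      calc a = (u * (p : ℤ) + v * (N : ℤ)) • a := by rw [huv, one_smul]
        _ = u • ((p : ℤ) • a) + v • ((N : ℤ) • a) := by rw [add_smul, mul_smul, mul_smul]
        _ = v • ((p : ℤ) • ((N : ℤ) • π y)) := by
            rw [natCast_zsmul, hpa, smul_zero, zero_add, hNa]
        _ = (p : ℤ) • (v • ((N : ℤ) • π y)) := smul_comm _ _ _
        _ = p • (v • ((N : ℤ) • π y)) := natCast_zsmul _ _
    set e := v • ((N : ℤ) • π y) with hedef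
    have heE : e ∈ E := E.zsmul_mem (E.zsmul_mem (hπmem y) _) _
    obtain ⟨m, hm0, hme⟩ := HtA e heE
    set c := m / p ^ m.factorization p with hcdef
    have hc1 : p ^ m.factorization p * c = m := Nat.ordProj_mul_ordCompl_eq_self m p
    have hpce : p • (c • e) = 0 := by
      apply He p hp _ (E.nsmul_mem heE c)
      exact ⟨m.factorization p, by rw [smul_smul, hc1, hme]⟩
    have hca : c • a = 0 := by
      rw [hae, smul_comm]
      exact hpce
    have hpc : ¬ p ∣ c := Nat.not_dvd_ordCompl hp hm0
    exact ha0 (coprime_smul_eq_zero ((hp.coprime_iff_not_dvd).mpr hpc) hpa hca)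
  -- every element of E has squarefree order with prime factors dividing N
  set Q := N.primeFactors with hQdef
  set M : ℕ := ∏ p ∈ Q, p with hMdef
  have H2 : ∀ x' : ↥E, addOrderOf x' ∣ M ∧ (addOrderOf x').primeFactors ⊆ Q := by
    intro x'
    have haE : (x' : A) ∈ E := x'.2
    set a : A := ↑x' with hadef
    set m := addOrderOf x' with hmdef
    have hm0 : m ≠ 0 := (htorE x').addOrderOf_pos.ne'
    have hma : m • a = 0 := by
      have h2 := congrArg Subtype.val (addOrderOf_nsmul_eq_zero x')
      push_cast at h2
      simpa using h2
    have hmin : ∀ n : ℕ, n • a = 0 → m ∣ n := by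
      intro n hn
      apply addOrderOf_dvd_iff_nsmul_eq_zero.mpr
      apply Subtype.ext; push_cast; simpa using hn
    have hsub : m.primeFactors ⊆ Q := by
      intro r hr
      have hrp : r.Prime := Nat.prime_of_mem_primeFactors hr
      have hrm : r ∣ m := Nat.dvd_of_mem_primeFactors hr
      have hv : 0 < m.factorization r := hrp.factorization_pos_of_dvd hm0 hrm
      set cr := m / r ^ m.factorization r with hcr
      have hc1 : r ^ m.factorization r * cr = m := Nat.ordProj_mul_ordCompl_eq_self m r
      have hrc : r • (cr • a) = 0 :=
        He r hrp _ (E.nsmul_mem haE cr) ⟨m.factorization r, by rw [smul_smul, hc1, hma]⟩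
      rw [hQdef]
      refine Nat.mem_primeFactors.mpr ⟨hrp, ?_, hN0⟩
      by_contra hrN
      have hcr0 : cr • a = 0 := K1 r hrp hrN _ (E.nsmul_mem haE cr) hrc
      have hd : m ∣ cr := hmin cr hcr0
      have h5 : r ^ m.factorization r * cr ∣ 1 * cr := by rw [hc1, one_mul]; exact hd
      have hpow : r ^ m.factorization r ∣ 1 :=
        (Nat.mul_dvd_mul_iff_right (show 0 < cr from Nat.ordCompl_pos r hm0)).mp h5
      have hr1 : r ∣ 1 := dvd_trans (dvd_pow_self r hv.ne') hpow
      exact hrp.ne_one (Nat.dvd_one.mp hr1)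
    have hsq : Squarefree m := by
      rw [Nat.squarefree_iff_prime_squarefree]
      intro r hrp hrr
      have hv2 : 2 ≤ m.factorization r :=
        (hrp.pow_dvd_iff_le_factorization hm0).mp (by rw [pow_two]; exact hrr)
      set cr := m / r ^ m.factorization r with hcr
      have hc1 : r ^ m.factorization r * cr = m := Nat.ordProj_mul_ordCompl_eq_self m r
      have hrc : r • (cr • a) = 0 :=
        He r hrp _ (E.nsmul_mem haE cr) ⟨m.factorization r, by rw [smul_smul, hc1, hma]⟩
      have h3 : (r * cr) • a = 0 := by rw [mul_smul]; exact hrc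
      have hd : m ∣ r * cr := hmin _ h3
      have h5 : r ^ m.factorization r * cr ∣ r * cr := by rw [hc1]; exact hd
      have hpow : r ^ m.factorization r ∣ r :=
        (Nat.mul_dvd_mul_iff_right (show 0 < cr from Nat.ordCompl_pos r hm0)).mp h5
      have hpow1 : r ^ m.factorization r ∣ r ^ 1 := by rw [pow_one]; exact hpow
      have hle : m.factorization r ≤ 1 := (Nat.pow_dvd_pow_iff_le_right hrp.one_lt).mp hpow1
      omega
    constructor
    · calc m = ∏ p ∈ m.primeFactors, p := (Nat.prod_primeFactors_of_squarefree hsq).symm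
        _ ∣ M := Finset.prod_dvd_prod_of_subset _ _ _ hsub
    · exact hsub
  -- conclude: E embeds into a finite product
  have hMdvd : ∀ q ∈ Q, q ∣ M := fun q hq => Finset.dvd_prod_of_mem _ hq
  have hM0 : ∀ x' : ↥E, M • (x' : A) = 0 := by
    intro x'
    have h1 : M • x' = 0 := addOrderOf_dvd_iff_nsmul_eq_zero.mp (H2 x').1
    have h2 := congrArg Subtype.val h1
    push_cast at h2
    simpa using h2
  have hmem : ∀ (x' : ↥E) (q : {q : ℕ // q ∈ Q}), (M / q.1) • (x' : A) ∈ pTorsion A q.1 := by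
    intro x' q
    refine ⟨1, ?_⟩
    rw [pow_one, smul_smul, Nat.mul_div_cancel' (hMdvd q.1 q.2)]
    exact hM0 x'
  haveI : ∀ q : {q : ℕ // q ∈ Q}, Finite ↥(pTorsion A q.1) := fun q =>
    Set.Finite.to_subtype (hfin q.1 (Nat.prime_of_mem_primeFactors q.2))
  refine Finite.of_injective (fun (x' : ↥E) (q : {q : ℕ // q ∈ Q}) =>
      (⟨(M / q.1) • (x' : A), hmem x' q⟩ : ↥(pTorsion A q.1))) ?_
  intro x y hxy
  have hz : ∀ q : ℕ, q ∈ Q → (M / q) • ((x - y : ↥E) : A) = 0 := by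
    intro q hq
    have h1 := congrArg Subtype.val (congrFun hxy ⟨q, hq⟩)
    simp only at h1
    push_cast
    rw [smul_sub, h1, sub_self]
  by_contra hne
  have hzne : (x - y : ↥E) ≠ 0 := sub_ne_zero.mpr hne
  set z := x - y with hzdef
  set m := addOrderOf z with hmdef
  have hm0 : m ≠ 0 := (htorE z).addOrderOf_pos.ne'
  have hm1 : m ≠ 1 := fun h => hzne (AddMonoid.addOrderOf_eq_one_iff.mp h)
  obtain ⟨r, hrp, hrm⟩ := Nat.exists_prime_and_dvd hm1
  have hrQ : r ∈ Q := (H2 z).2 (Nat.mem_primeFactors.mpr ⟨hrp, hrm, hm0⟩)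
  have h6 : m ∣ M / r := by
    apply addOrderOf_dvd_iff_nsmul_eq_zero.mpr
    apply Subtype.ext; push_cast; simpa using hz r hrQ
  have hrMr : r ∣ M / r := dvd_trans hrm h6
  have hMr : M / r = ∏ p ∈ Q.erase r, p := by
    have h7 : r * ∏ p ∈ Q.erase r, p = ∏ p ∈ Q, p := Finset.mul_prod_erase Q (fun p => p) hrQ
    rw [hMdef, ← h7, Nat.mul_div_cancel_left _ hrp.pos]
  rw [hMr] at hrMr
  obtain ⟨p0, hp0mem, hp0⟩ := (Prime.dvd_finset_prod_iff hrp.prime _).mp hrMr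
  have heq : r = p0 :=
    (Nat.prime_dvd_prime_iff_eq hrp
      (Nat.prime_of_mem_primeFactors (Finset.mem_of_mem_erase hp0mem))).mp hp0
  exact (Finset.ne_of_mem_erase hp0mem) heq.symm
end
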